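/- arXiv:1004.4964 — 5 statements merged into one kernel-verified Lean document; each statement's English description precedes it below -/
import Mathlib

section
/- Maassen–Uffink entropic uncertainty principle: Let e = {e_1,…,e_N} and f = {f_1,…,f_N} be two orthonormal bases of ℂ^N. For every unit vector ψ ∈ ℂ^N, the entropies H(ψ,e) = ∑_{i=1}^N η(|⟨e_i,ψ⟩|²) and H(ψ,f) = ∑_{j=1}^N η(|⟨f_j,ψ⟩|²) satisfy H(ψ,e) + H(ψ,f) ≥ −2·log( max_{i,j} |⟨e_i, f_j⟩| ). -/
open scoped InnerProductSpace

/-- The entropy function `η(s) = -s·log s` (with `η(0) = 0`, since `Real.log 0 = 0`). -/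
noncomputable def eta (s : ℝ) : ℝ := -s * Real.log s

section MaassenUffinkAux

open Finset

noncomputable def pw (a : ℝ) (z : ℂ) : ℂ := if a = 0 then 0 else Complex.exp (((1+z)/2) * Real.log a)

lemma pw_diff (a : ℝ) : Differentiable ℂ (pw a) := by
  unfold pw
  split
  · exact differentiable_const 0
  · exact Complex.differentiable_exp.comp (((differentiable_const _).add differentiable_fun_id).div_const 2 |>.mul (differentiable_const _))

lemma pw_norm (a : ℝ) (ha : 0 ≤ a) (z : ℂ) (hz : -1 < z.re) :
    ‖pw a z‖ = a ^ ((1 + z.re)/2) := by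
  unfold pw
  split
  · subst a
    rw [norm_zero, Real.zero_rpow (by linarith)]
  · rename_i h
    have hapos : 0 < a := lt_of_le_of_ne ha (Ne.symm h)
    rw [Complex.norm_exp]
    have : (((1+z)/2) * (Real.log a : ℂ)).re = ((1 + z.re)/2) * Real.log a := by
      simp [Complex.div_re, Complex.add_re, Complex.mul_re]
    rw [this, Real.rpow_def_of_pos hapos, mul_comm]

lemma pw_real (a : ℝ) (ha : 0 ≤ a) (θ : ℝ) (hθ : 0 ≤ θ) :
    pw a (θ : ℂ) = ((a ^ ((1+θ)/2) : ℝ) : ℂ) := by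
  unfold pw
  split
  · subst a
    rw [Real.zero_rpow (by positivity), Complex.ofReal_zero]
  · rename_i h
    have hapos : 0 < a := lt_of_le_of_ne ha (Ne.symm h)
    rw [Real.rpow_def_of_pos hapos, Complex.ofReal_exp, Complex.ofReal_mul]
    push_cast
    ring_nf

lemma cs_sum (n : ℕ) (x y : Fin n → ℂ) :
    ‖∑ j, x j * y j‖ ≤ Real.sqrt (∑ j, ‖x j‖^2) * Real.sqrt (∑ j, ‖y j‖^2) := by
  classical
  let X : EuclideanSpace ℂ (Fin n) := WithLp.toLp 2 (fun j => star (x j))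
  let Y : EuclideanSpace ℂ (Fin n) := WithLp.toLp 2 y
  have h1 : (inner ℂ X Y : ℂ) = ∑ j, x j * y j := by
    simp [X, Y, PiLp.inner_apply, RCLike.inner_apply, mul_comm]
  have h2 := norm_inner_le_norm (𝕜 := ℂ) X Y
  rw [h1] at h2
  have hX : ‖X‖ = Real.sqrt (∑ j, ‖x j‖^2) := by
    rw [EuclideanSpace.norm_eq]
    simp [X]
  have hY : ‖Y‖ = Real.sqrt (∑ j, ‖y j‖^2) := by
    rw [EuclideanSpace.norm_eq]
  rw [hX, hY] at h2
  exact h2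

lemma pw_norm_le_max (a : ℝ) (ha : 0 ≤ a) (z : ℂ) (h0 : 0 ≤ z.re) (h1 : z.re ≤ 1) :
    ‖pw a z‖ ≤ max 1 a := by
  rw [pw_norm a ha z (by linarith)]
  rcases le_or_gt a 1 with h | h
  · exact le_max_of_le_left (Real.rpow_le_one ha h (by linarith))
  · refine le_max_of_le_right ?_
    calc a ^ ((1+z.re)/2) ≤ a ^ (1:ℝ) := Real.rpow_le_rpow_of_exponent_le h.le (by linarith)
    _ = a := Real.rpow_one a

lemma bilinear (n : ℕ) (M : Fin n → Fin n → ℂ) (c : ℝ) (hc : 0 ≤ c)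
    (hM : ∀ j i, ‖M j i‖ ≤ c)
    (hM2 : ∀ w : Fin n → ℂ, ∑ j, ‖∑ i, M j i * w i‖^2 ≤ ∑ i, ‖w i‖^2)
    (A B : Fin n → ℝ) (hA : ∀ i, 0 ≤ A i) (hB : ∀ j, 0 ≤ B j)
    (θ : ℝ) (hθ0 : 0 ≤ θ) (hθ1 : θ ≤ 1) :
    ‖∑ j, ∑ i, ((B j ^ ((1+θ)/2) : ℝ) : ℂ) * M j i * ((A i ^ ((1+θ)/2) : ℝ) : ℂ)‖
      ≤ (Real.sqrt (∑ j, B j) * Real.sqrt (∑ i, A i)) ^ (1-θ)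
        * (c * (∑ i, A i) * (∑ j, B j)) ^ θ := by
  classical
  set F : ℂ → ℂ := fun z => ∑ j, ∑ i, pw (B j) z * M j i * pw (A i) z with hF
  have hdiff : Differentiable ℂ F := by
    apply Differentiable.fun_sum
    intro j _
    apply Differentiable.fun_sum
    intro i _
    exact ((pw_diff (B j)).mul (differentiable_const _)).mul (pw_diff (A i))
  -- edge bounds
  have edge0 : ∀ z : ℂ, z.re = 0 → ‖F z‖ ≤ Real.sqrt (∑ j, B j) * Real.sqrt (∑ i, A i) := by
    intro z hz
    have hFz : F z = ∑ j, pw (B j) z * (∑ i, M j i * pw (A i) z) := by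
      simp only [hF, Finset.mul_sum]
      exact Finset.sum_congr rfl fun j _ => Finset.sum_congr rfl fun i _ => by ring
    rw [hFz]
    refine le_trans (cs_sum n _ _) ?_
    have e1 : ∑ j, ‖pw (B j) z‖^2 = ∑ j, B j := by
      refine Finset.sum_congr rfl fun j _ => ?_
      rw [pw_norm (B j) (hB j) z (by rw [hz]; norm_num), hz]
      norm_num
      rw [← Real.sqrt_eq_rpow, Real.sq_sqrt (hB j)]
    have e2 : Real.sqrt (∑ j, ‖∑ i, M j i * pw (A i) z‖^2) ≤ Real.sqrt (∑ i, A i) := by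
      refine Real.sqrt_le_sqrt (le_trans (hM2 _) (le_of_eq ?_))
      refine Finset.sum_congr rfl fun i _ => ?_
      rw [pw_norm (A i) (hA i) z (by rw [hz]; norm_num), hz]
      norm_num
      rw [← Real.sqrt_eq_rpow, Real.sq_sqrt (hA i)]
    rw [e1]
    exact mul_le_mul_of_nonneg_left e2 (Real.sqrt_nonneg _)
  have edge1 : ∀ z : ℂ, z.re = 1 → ‖F z‖ ≤ c * (∑ i, A i) * (∑ j, B j) := by
    intro z hz
    have : ‖F z‖ ≤ ∑ j, ∑ i, B j * c * A i := by
      refine le_trans (norm_sum_le _ _) (Finset.sum_le_sum fun j _ => ?_)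
      refine le_trans (norm_sum_le _ _) (Finset.sum_le_sum fun i _ => ?_)
      rw [norm_mul, norm_mul]
      have nB : ‖pw (B j) z‖ = B j := by
        rw [pw_norm (B j) (hB j) z (by rw [hz]; norm_num), hz]
        norm_num
      have nA : ‖pw (A i) z‖ = A i := by
        rw [pw_norm (A i) (hA i) z (by rw [hz]; norm_num), hz]
        norm_num
      rw [nA, nB]
      have := hM j i
      have hB' := hB j
      have hA' := hA i
      have hMn : 0 ≤ ‖M j i‖ := norm_nonneg _
      nlinarith [mul_le_mul_of_nonneg_left (hM j i) hB']
    refine le_trans this (le_of_eq ?_)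
    simp only [← Finset.mul_sum, ← Finset.sum_mul]
    ring
  -- boundedness
  have hBdd : BddAbove ((norm ∘ F) '' (Complex.HadamardThreeLines.verticalClosedStrip 0 1)) := by
    refine ⟨∑ j, ∑ i, max 1 (B j) * c * max 1 (A i), ?_⟩
    rintro x ⟨z, hz, rfl⟩
    simp only [Function.comp_apply]
    refine le_trans (norm_sum_le _ _) (Finset.sum_le_sum fun j _ => ?_)
    refine le_trans (norm_sum_le _ _) (Finset.sum_le_sum fun i _ => ?_)
    rw [norm_mul, norm_mul]
    have h0 : (0:ℝ) ≤ z.re := hz.1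
    have h1 : z.re ≤ 1 := hz.2
    have nB := pw_norm_le_max (B j) (hB j) z h0 h1
    have nA := pw_norm_le_max (A i) (hA i) z h0 h1
    have hMn := hM j i
    have m1 : (0:ℝ) ≤ max 1 (B j) := le_max_of_le_left zero_le_one
    have m2 : (0:ℝ) ≤ max 1 (A i) := le_max_of_le_left zero_le_one
    exact mul_le_mul (mul_le_mul nB hMn (norm_nonneg _) m1) nA (norm_nonneg _) (by positivity)
  -- apply Hadamard
  have hz : (θ : ℂ) ∈ Complex.HadamardThreeLines.verticalClosedStrip 0 1 := by
    simp [Complex.HadamardThreeLines.verticalClosedStrip, Set.mem_Icc, hθ0, hθ1]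
  have key := Complex.HadamardThreeLines.norm_le_interp_of_mem_verticalClosedStrip₀₁' F hz
    hdiff.diffContOnCl hBdd
    (fun z hz => edge0 z hz) (fun z hz => edge1 z hz)
  rw [Complex.ofReal_re] at key
  have hFθ : F (θ : ℂ) = ∑ j, ∑ i, ((B j ^ ((1+θ)/2) : ℝ) : ℂ) * M j i * ((A i ^ ((1+θ)/2) : ℝ) : ℂ) := by
    refine Finset.sum_congr rfl fun j _ => Finset.sum_congr rfl fun i _ => ?_
    rw [pw_real (B j) (hB j) θ hθ0, pw_real (A i) (hA i) θ hθ0]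
  rw [hFθ] at key
  exact key

lemma rt (n : ℕ) (M : Fin n → Fin n → ℂ) (c : ℝ) (hc : 0 ≤ c)
    (hM : ∀ j i, ‖M j i‖ ≤ c)
    (hM2 : ∀ w : Fin n → ℂ, ∑ j, ‖∑ i, M j i * w i‖^2 ≤ ∑ i, ‖w i‖^2)
    (u : Fin n → ℂ) (θ : ℝ) (hθ0 : 0 < θ) (hθ1 : θ < 1) :
    (∑ j, (‖∑ i, M j i * u i‖^2 : ℝ) ^ (1/(1-θ))) ^ ((1-θ)/2)
      ≤ c ^ θ * (∑ i, (‖u i‖^2 : ℝ) ^ (1/(1+θ))) ^ ((1+θ)/2) := by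
  classical
  set φ : Fin n → ℂ := fun j => ∑ i, M j i * u i with hφ
  set q : ℝ := 2/(1-θ) with hq
  set p : ℝ := 2/(1+θ) with hp
  have h1θ : (0:ℝ) < 1 - θ := by linarith
  have h1θ' : (0:ℝ) < 1 + θ := by linarith
  have hqpos : 0 < q := by positivity
  have hppos : 0 < p := by positivity
  set ε : Fin n → ℂ := fun i => if u i = 0 then 1 else u i / ‖u i‖ with hε
  set δ : Fin n → ℂ := fun j => if φ j = 0 then 1 else (starRingEnd ℂ) (φ j) / ‖φ j‖ with hδ
  have hεn : ∀ i, ‖ε i‖ = 1 := by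
    intro i
    simp only [hε]
    split
    · simp
    · rename_i h
      rw [norm_div, Complex.norm_real, Real.norm_of_nonneg (norm_nonneg _),
        div_self (norm_ne_zero_iff.mpr h)]
  have hδn : ∀ j, ‖δ j‖ = 1 := by
    intro j
    simp only [hδ]
    split
    · simp
    · rename_i h
      rw [norm_div, RCLike.norm_conj, Complex.norm_real, Real.norm_of_nonneg (norm_nonneg _),
        div_self (norm_ne_zero_iff.mpr h)]
  set A : Fin n → ℝ := fun i => ‖u i‖ ^ p with hA
  set B : Fin n → ℝ := fun j => ‖φ j‖ ^ q with hB
  have hAnn : ∀ i, 0 ≤ A i := fun i => Real.rpow_nonneg (norm_nonneg _) _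
  have hBnn : ∀ j, 0 ≤ B j := fun j => Real.rpow_nonneg (norm_nonneg _) _
  set M' : Fin n → Fin n → ℂ := fun j i => δ j * M j i * ε i with hM'
  have hM'le : ∀ j i, ‖M' j i‖ ≤ c := by
    intro j i
    simp only [hM', norm_mul, hεn, hδn, one_mul, mul_one]
    exact hM j i
  have hM'2 : ∀ w : Fin n → ℂ, ∑ j, ‖∑ i, M' j i * w i‖^2 ≤ ∑ i, ‖w i‖^2 := by
    intro w
    have e : ∀ j, ‖∑ i, M' j i * w i‖ = ‖∑ i, M j i * (ε i * w i)‖ := by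
      intro j
      have : ∑ i, M' j i * w i = δ j * ∑ i, M j i * (ε i * w i) := by
        rw [Finset.mul_sum]
        exact Finset.sum_congr rfl fun i _ => by simp only [hM']; ring
      rw [this, norm_mul, hδn, one_mul]
    simp_rw [e]
    refine le_trans (hM2 (fun i => ε i * w i)) (le_of_eq ?_)
    exact Finset.sum_congr rfl fun i _ => by rw [norm_mul, hεn, one_mul]
  have key := bilinear n M' c hc hM'le hM'2 A B hAnn hBnn θ hθ0.le hθ1.le
  set S : ℝ := ∑ j, B j with hS
  set P : ℝ := ∑ i, A i with hP
  have hSnn : 0 ≤ S := Finset.sum_nonneg fun j _ => hBnn j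
  have hPnn : 0 ≤ P := Finset.sum_nonneg fun i _ => hAnn i
  have hAval : ∀ i, ((A i ^ ((1+θ)/2) : ℝ) : ℂ) * ε i = u i := by
    intro i
    have hval : A i ^ ((1+θ)/2) = ‖u i‖ := by
      simp only [hA]
      rw [← Real.rpow_mul (norm_nonneg _)]
      have : p * ((1+θ)/2) = 1 := by
        rw [hp]; field_simp
      rw [this, Real.rpow_one]
    rw [hval]
    rcases eq_or_ne (u i) 0 with h | h
    · simp [hε, h]
    · simp only [hε, if_neg h]
      rw [mul_comm, div_mul_cancel₀]
      exact_mod_cast norm_ne_zero_iff.mpr h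
  have hδφ : ∀ j, δ j * φ j = ((‖φ j‖ : ℝ) : ℂ) := by
    intro j
    rcases eq_or_ne (φ j) 0 with h | h
    · simp [hδ, h]
    · simp only [hδ, if_neg h]
      have hn : ((‖φ j‖ : ℝ) : ℂ) ≠ 0 := by
        exact_mod_cast norm_ne_zero_iff.mpr h
      rw [div_mul_eq_mul_div, mul_comm, Complex.mul_conj, Complex.normSq_eq_norm_sq,
        div_eq_iff hn, ← Complex.ofReal_mul]
      norm_cast
      rw [pow_two]
  have hBval : ∀ j, (B j ^ ((1+θ)/2) : ℝ) * ‖φ j‖ = B j := by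
    intro j
    rcases eq_or_ne (‖φ j‖) 0 with h | h
    · simp only [hB]
      rw [h, Real.zero_rpow hqpos.ne']
      simp [Real.zero_rpow (by positivity : ((1+θ)/2 : ℝ) ≠ 0)]
    · simp only [hB]
      rw [← Real.rpow_mul (norm_nonneg _), ← Real.rpow_add_one h]
      congr 1
      rw [hq]; field_simp; ring
  have hsum : (∑ j, ∑ i, (((B j ^ ((1+θ)/2) : ℝ) : ℂ) * M' j i * ((A i ^ ((1+θ)/2) : ℝ) : ℂ)))
      = ((S : ℝ) : ℂ) := by
    rw [hS]
    push_cast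
    refine Finset.sum_congr rfl fun j _ => ?_
    have e1 : ∑ i, ((B j ^ ((1+θ)/2) : ℝ) : ℂ) * M' j i * ((A i ^ ((1+θ)/2) : ℝ) : ℂ)
        = ((B j ^ ((1+θ)/2) : ℝ) : ℂ) * (δ j * φ j) := by
      have hφj : φ j = ∑ i, M j i * u i := by rw [hφ]
      rw [hφj, Finset.mul_sum, Finset.mul_sum]
      refine Finset.sum_congr rfl fun i _ => ?_
      calc ((B j ^ ((1+θ)/2) : ℝ) : ℂ) * M' j i * ((A i ^ ((1+θ)/2) : ℝ) : ℂ)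
          = ((B j ^ ((1+θ)/2) : ℝ) : ℂ) * (δ j * (M j i * (((A i ^ ((1+θ)/2) : ℝ) : ℂ) * ε i))) := by
            simp only [hM']; ring
        _ = ((B j ^ ((1+θ)/2) : ℝ) : ℂ) * (δ j * (M j i * u i)) := by rw [hAval i]
    rw [e1, hδφ j, ← Complex.ofReal_mul, hBval j]
  rw [hsum, Complex.norm_real, Real.norm_of_nonneg hSnn] at key
  -- translate the goal sums into S and P
  have hgoalB : ∑ j, (‖∑ i, M j i * u i‖^2 : ℝ) ^ (1/(1-θ)) = S := by
    rw [hS]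
    refine Finset.sum_congr rfl fun j _ => ?_
    simp only [hB, hφ]
    rw [← Real.rpow_natCast (‖∑ i, M j i * u i‖) 2, ← Real.rpow_mul (norm_nonneg _)]
    congr 1
    rw [hq]; push_cast; ring
  have hgoalA : ∑ i, (‖u i‖^2 : ℝ) ^ (1/(1+θ)) = P := by
    rw [hP]
    refine Finset.sum_congr rfl fun i _ => ?_
    simp only [hA]
    rw [← Real.rpow_natCast (‖u i‖) 2, ← Real.rpow_mul (norm_nonneg _)]
    congr 1
    rw [hp]; push_cast; ring
  rw [hgoalB, hgoalA]
  rcases eq_or_lt_of_le hSnn with hS0 | hSpos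
  · rw [← hS0, Real.zero_rpow (by positivity)]
    positivity
  · have hPpos : 0 < P := by
      rcases eq_or_lt_of_le hPnn with hP0 | h
      · exfalso
        have hsq : Real.sqrt P = 0 := by rw [← hP0]; simp
        rw [hsq, mul_zero, Real.zero_rpow (by linarith)] at key
        nlinarith [Real.rpow_nonneg (mul_nonneg (mul_nonneg hc hPnn) hSnn) θ]
      · exact h
    have hcpos : 0 < c := by
      rcases eq_or_lt_of_le hc with hc0 | h
      · exfalso
        rw [← hc0, zero_mul, zero_mul, Real.zero_rpow hθ0.ne', mul_zero] at key
        linarith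
      · exact h
    have hsqS : 0 < Real.sqrt S := Real.sqrt_pos.mpr hSpos
    have hsqP : 0 < Real.sqrt P := Real.sqrt_pos.mpr hPpos
    have hb1 : 0 < Real.sqrt S * Real.sqrt P := mul_pos hsqS hsqP
    have hb2 : 0 < c * P * S := mul_pos (mul_pos hcpos hPpos) hSpos
    rw [← Real.log_le_log_iff (Real.rpow_pos_of_pos hSpos _)
      (mul_pos (Real.rpow_pos_of_pos hcpos θ) (Real.rpow_pos_of_pos hPpos _))]
    have hkey' := (Real.log_le_log_iff hSpos
      (mul_pos (Real.rpow_pos_of_pos hb1 _) (Real.rpow_pos_of_pos hb2 _))).mpr key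
    rw [Real.log_mul (Real.rpow_pos_of_pos hb1 _).ne' (Real.rpow_pos_of_pos hb2 _).ne',
        Real.log_rpow hb1, Real.log_rpow hb2,
        Real.log_mul hsqS.ne' hsqP.ne', Real.log_mul (mul_pos hcpos hPpos).ne' hSpos.ne',
        Real.log_mul hcpos.ne' hPpos.ne',
        Real.log_sqrt hSnn, Real.log_sqrt hPnn] at hkey'
    rw [Real.log_rpow hSpos,
        Real.log_mul (Real.rpow_pos_of_pos hcpos θ).ne' (Real.rpow_pos_of_pos hPpos _).ne',
        Real.log_rpow hcpos, Real.log_rpow hPpos]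
    linarith

lemma term_deriv_A (a : ℝ) (ha : 0 ≤ a) :
    HasDerivAt (fun θ : ℝ => a ^ (1/(1+θ))) (eta a) 0 := by
  rcases eq_or_lt_of_le ha with h0 | hpos
  · have hev : (fun θ : ℝ => a ^ (1/(1+θ))) =ᶠ[nhds (0:ℝ)] (fun _ => 0) := by
      have : Set.Ioo (-1 : ℝ) 1 ∈ nhds (0:ℝ) := Ioo_mem_nhds (by norm_num) (by norm_num)
      filter_upwards [this] with θ hθ
      have h1 : (0:ℝ) < 1 + θ := by linarith [hθ.1]
      rw [← h0, Real.zero_rpow (by positivity)]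
    have : HasDerivAt (fun _ : ℝ => (0:ℝ)) (eta a) 0 := by
      have : eta a = 0 := by rw [← h0]; simp [eta]
      rw [this]
      exact hasDerivAt_const 0 0
    exact this.congr_of_eventuallyEq hev
  · have hg : HasDerivAt (fun θ : ℝ => 1/(1+θ)) (-1) 0 := by
      have h1 : HasDerivAt (fun θ : ℝ => 1+θ) 1 0 := (hasDerivAt_id 0).const_add 1
      have := h1.fun_inv (by norm_num)
      simpa [one_div] using this
    have := (hasDerivAt_const (0:ℝ) a).rpow hg (by simpa using hpos)
    convert this using 1
    simp [eta]

lemma term_deriv_B (b : ℝ) (hb : 0 ≤ b) :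
    HasDerivAt (fun θ : ℝ => b ^ (1/(1-θ))) (-eta b) 0 := by
  rcases eq_or_lt_of_le hb with h0 | hpos
  · have hev : (fun θ : ℝ => b ^ (1/(1-θ))) =ᶠ[nhds (0:ℝ)] (fun _ => 0) := by
      have : Set.Ioo (-1 : ℝ) 1 ∈ nhds (0:ℝ) := Ioo_mem_nhds (by norm_num) (by norm_num)
      filter_upwards [this] with θ hθ
      have h1 : (0:ℝ) < 1 - θ := by linarith [hθ.2]
      rw [← h0, Real.zero_rpow (by positivity)]
    have : HasDerivAt (fun _ : ℝ => (0:ℝ)) (-eta b) 0 := by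
      have : -eta b = 0 := by rw [← h0]; simp [eta]
      rw [this]
      exact hasDerivAt_const 0 0
    exact this.congr_of_eventuallyEq hev
  · have hg : HasDerivAt (fun θ : ℝ => 1/(1-θ)) 1 0 := by
      have h1 : HasDerivAt (fun θ : ℝ => 1-θ) (-1) 0 := by
        simpa using (hasDerivAt_id (0:ℝ)).const_sub 1
      have := h1.fun_inv (by norm_num)
      simpa [one_div] using this
    have := (hasDerivAt_const (0:ℝ) b).rpow hg (by simpa using hpos)
    convert this using 1
    simp [eta]

lemma entropy_step (n : ℕ) (a b : Fin n → ℝ) (ha : ∀ i, 0 ≤ a i) (hb : ∀ j, 0 ≤ b j)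
    (hsa : ∑ i, a i = 1) (hsb : ∑ j, b j = 1) (c : ℝ) (hc : 0 < c)
    (hineq : ∀ θ : ℝ, 0 < θ → θ < 1 →
      (∑ j, (b j) ^ (1/(1-θ))) ^ ((1-θ)/2) ≤ c ^ θ * (∑ i, (a i) ^ (1/(1+θ))) ^ ((1+θ)/2)) :
    (∑ i, eta (a i)) + (∑ j, eta (b j)) ≥ -2 * Real.log c := by
  classical
  set Af : ℝ → ℝ := fun θ => ∑ i, (a i) ^ (1/(1+θ)) with hAf
  set Bf : ℝ → ℝ := fun θ => ∑ j, (b j) ^ (1/(1-θ)) with hBf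
  have hAf0 : Af 0 = 1 := by
    have h : Af 0 = ∑ i, a i := by
      rw [hAf]
      refine Finset.sum_congr rfl fun i _ => ?_
      norm_num
    rw [h, hsa]
  have hBf0 : Bf 0 = 1 := by
    have h : Bf 0 = ∑ j, b j := by
      rw [hBf]
      refine Finset.sum_congr rfl fun j _ => ?_
      norm_num
    rw [h, hsb]
  have hApos : ∀ θ : ℝ, 0 ≤ θ → θ < 1 → 0 < Af θ := by
    intro θ h0 h1
    obtain ⟨i0, hi0⟩ : ∃ i, a i ≠ 0 := by
      by_contra h
      push_neg at h
      rw [Finset.sum_eq_zero (fun i _ => h i)] at hsa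
      norm_num at hsa
    refine Finset.sum_pos' (fun i _ => Real.rpow_nonneg (ha i) _) ⟨i0, Finset.mem_univ _, ?_⟩
    exact Real.rpow_pos_of_pos (lt_of_le_of_ne (ha i0) (Ne.symm hi0)) _
  have hBpos : ∀ θ : ℝ, 0 ≤ θ → θ < 1 → 0 < Bf θ := by
    intro θ h0 h1
    obtain ⟨j0, hj0⟩ : ∃ j, b j ≠ 0 := by
      by_contra h
      push_neg at h
      rw [Finset.sum_eq_zero (fun j _ => h j)] at hsb
      norm_num at hsb
    refine Finset.sum_pos' (fun j _ => Real.rpow_nonneg (hb j) _) ⟨j0, Finset.mem_univ _, ?_⟩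
    exact Real.rpow_pos_of_pos (lt_of_le_of_ne (hb j0) (Ne.symm hj0)) _
  set G : ℝ → ℝ := fun θ =>
    ((1-θ)/2) * Real.log (Bf θ) - ((1+θ)/2) * Real.log (Af θ) - θ * Real.log c with hG
  have hG0 : G 0 = 0 := by
    rw [hG]
    simp [hAf0, hBf0]
  have hGle : ∀ θ : ℝ, 0 < θ → θ < 1 → G θ ≤ 0 := by
    intro θ h0 h1
    have hA := hApos θ h0.le h1
    have hB := hBpos θ h0.le h1
    have hkey := hineq θ h0 h1
    have := (Real.log_le_log_iff (Real.rpow_pos_of_pos hB _)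
      (mul_pos (Real.rpow_pos_of_pos hc θ) (Real.rpow_pos_of_pos hA _))).mpr hkey
    rw [Real.log_rpow hB, Real.log_mul (Real.rpow_pos_of_pos hc θ).ne'
      (Real.rpow_pos_of_pos hA _).ne', Real.log_rpow hc, Real.log_rpow hA] at this
    rw [hG]
    simp only
    linarith
  -- derivative of G at 0
  have hdA : HasDerivAt Af (∑ i, eta (a i)) 0 := by
    rw [hAf]
    exact HasDerivAt.fun_sum (fun i _ => term_deriv_A (a i) (ha i))
  have hdB : HasDerivAt Bf (-∑ j, eta (b j)) 0 := by
    rw [hBf]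
    have := HasDerivAt.fun_sum (fun j (_ : j ∈ Finset.univ) => term_deriv_B (b j) (hb j))
    simpa [Finset.sum_neg_distrib] using this
  have hdlogA : HasDerivAt (fun θ => Real.log (Af θ)) (∑ i, eta (a i)) 0 := by
    have := hdA.log (by rw [hAf0]; norm_num)
    simpa [hAf0] using this
  have hdlogB : HasDerivAt (fun θ => Real.log (Bf θ)) (-∑ j, eta (b j)) 0 := by
    have := hdB.log (by rw [hBf0]; norm_num)
    simpa [hBf0] using this
  have hd1 : HasDerivAt (fun θ : ℝ => (1-θ)/2) (-1/2) 0 := by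
    have : HasDerivAt (fun θ : ℝ => 1-θ) (-1) 0 := by
      simpa using (hasDerivAt_id (0:ℝ)).const_sub 1
    exact this.div_const 2
  have hd2 : HasDerivAt (fun θ : ℝ => (1+θ)/2) (1/2) 0 := by
    have : HasDerivAt (fun θ : ℝ => 1+θ) 1 0 := (hasDerivAt_id 0).const_add 1
    exact this.div_const 2
  have hd3 : HasDerivAt (fun θ : ℝ => θ * Real.log c) (Real.log c) 0 := by
    simpa using (hasDerivAt_id (0:ℝ)).mul_const (Real.log c)
  set D : ℝ := (-∑ j, eta (b j))/2 - (∑ i, eta (a i))/2 - Real.log c with hD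
  have hdG : HasDerivAt G D 0 := by
    have h1 := (hd1.fun_mul hdlogB).fun_sub (hd2.fun_mul hdlogA)
    have h2 := h1.fun_sub hd3
    refine h2.congr_deriv ?_
    rw [hD, hAf0, hBf0]
    simp [Real.log_one]
    ring
  -- D ≤ 0 from G ≤ 0 on (0,1) and G 0 = 0
  have hDle : D ≤ 0 := by
    have htend : Filter.Tendsto (slope G 0) (nhdsWithin 0 (Set.Ioi 0)) (nhds D) := by
      have := hasDerivAt_iff_tendsto_slope.mp hdG
      exact this.mono_left (nhdsWithin_mono 0 (fun x hx => ne_of_gt hx))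
    refine le_of_tendsto htend ?_
    filter_upwards [Ioo_mem_nhdsGT_of_mem (Set.mem_Ico.mpr ⟨le_refl 0, one_pos⟩)] with θ hθ
    rw [slope_def_field, hG0, sub_zero, sub_zero]
    exact div_nonpos_of_nonpos_of_nonneg (hGle θ hθ.1 hθ.2) hθ.1.le
  rw [hD] at hDle
  linarith

lemma parseval {E : Type*} [NormedAddCommGroup E] [InnerProductSpace ℂ E] {n : ℕ}
    (b : OrthonormalBasis (Fin n) ℂ E) (x : E) :
    ∑ i, ‖⟪b i, x⟫_ℂ‖^2 = ‖x‖^2 := by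
  have h := b.sum_inner_mul_inner x x
  have h2 : ∀ i, ⟪x, b i⟫_ℂ * ⟪b i, x⟫_ℂ = ((‖⟪b i, x⟫_ℂ‖^2 : ℝ) : ℂ) := by
    intro i
    rw [← inner_conj_symm x (b i), mul_comm, Complex.mul_conj, Complex.normSq_eq_norm_sq]
  have h3 : ((∑ i, ‖⟪b i, x⟫_ℂ‖^2 : ℝ) : ℂ) = ⟪x, x⟫_ℂ := by
    rw [← h, Complex.ofReal_sum]
    exact Finset.sum_congr rfl fun i _ => by rw [h2 i]
  have h4 : ⟪x, x⟫_ℂ = ((‖x‖^2 : ℝ) : ℂ) := by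
    rw [inner_self_eq_norm_sq_to_K]
    push_cast
    rfl
  exact_mod_cast h3.trans h4


end MaassenUffinkAux

/-- **Maassen–Uffink entropic uncertainty principle.**  For two orthonormal bases
`e`, `f` of `ℂ^N` and any unit vector `ψ`, the entropies of the probability
distributions `|⟨e_i,ψ⟩|²` and `|⟨f_j,ψ⟩|²` satisfy
`H(ψ,e) + H(ψ,f) ≥ -2 log (max_{i,j} |⟨e_i,f_j⟩|)`. -/
theorem maassen_uffink_entropic_uncertainty (N : ℕ) (hN : 0 < N)
    (e f : OrthonormalBasis (Fin N) ℂ (EuclideanSpace ℂ (Fin N)))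
    (ψ : EuclideanSpace ℂ (Fin N)) (hψ : ‖ψ‖ = 1) :
    (∑ i, eta (‖⟪e i, ψ⟫_ℂ‖ ^ 2)) + (∑ j, eta (‖⟪f j, ψ⟫_ℂ‖ ^ 2)) ≥
      -2 * Real.log (⨆ p : Fin N × Fin N, ‖⟪e p.1, f p.2⟫_ℂ‖) := by
  classical
  set c : ℝ := ⨆ p : Fin N × Fin N, ‖⟪e p.1, f p.2⟫_ℂ‖ with hcdef
  set u : Fin N → ℂ := fun i => ⟪e i, ψ⟫_ℂ with hu
  set M : Fin N → Fin N → ℂ := fun j i => ⟪f j, e i⟫_ℂ with hM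
  have hbdd : BddAbove (Set.range fun p : Fin N × Fin N => ‖⟪e p.1, f p.2⟫_ℂ‖) :=
    Set.Finite.bddAbove (Set.finite_range _)
  have hMle : ∀ j i, ‖M j i‖ ≤ c := by
    intro j i
    have h1 : ‖M j i‖ = ‖⟪e i, f j⟫_ℂ‖ := by
      rw [hM]
      exact norm_inner_symm (f j) (e i)
    rw [h1, hcdef]
    exact le_ciSup hbdd (i, j)
  -- expansion of inner products in basis e
  have hexp : ∀ x : EuclideanSpace ℂ (Fin N), ∀ w : Fin N → ℂ,
      ⟪x, ∑ i, w i • e i⟫_ℂ = ∑ i, w i * ⟪x, e i⟫_ℂ := by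
    intro x w
    rw [inner_sum]
    exact Finset.sum_congr rfl fun i _ => inner_smul_right _ _ _
  have hφ : ∀ j, ⟪f j, ψ⟫_ℂ = ∑ i, M j i * u i := by
    intro j
    conv_lhs => rw [← e.sum_repr' ψ]
    rw [hexp]
    exact Finset.sum_congr rfl fun i _ => by rw [hM, hu, mul_comm]
  have hM2 : ∀ w : Fin N → ℂ, ∑ j, ‖∑ i, M j i * w i‖^2 ≤ ∑ i, ‖w i‖^2 := by
    intro w
    set x : EuclideanSpace ℂ (Fin N) := ∑ i, w i • e i with hx
    have h1 : ∀ j, ∑ i, M j i * w i = ⟪f j, x⟫_ℂ := by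
      intro j
      rw [hx, hexp]
      exact Finset.sum_congr rfl fun i _ => by rw [hM, mul_comm]
    have h2 : ∑ j, ‖∑ i, M j i * w i‖^2 = ‖x‖^2 := by
      rw [← parseval f x]
      exact Finset.sum_congr rfl fun j _ => by rw [h1 j]
    have h3 : ‖x‖^2 = ∑ i, ‖w i‖^2 := by
      rw [← parseval e x]
      refine Finset.sum_congr rfl fun i _ => ?_
      have : ⟪e i, x⟫_ℂ = w i := by
        rw [hx]
        exact e.orthonormal.inner_right_fintype w i
      rw [this]
    rw [h2, h3]
  have hcpos : 0 < c := by
    have hsum : ∑ i, ‖⟪e i, f ⟨0, hN⟩⟫_ℂ‖^2 = 1 := by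
      rw [parseval e (f ⟨0, hN⟩), f.orthonormal.1 ⟨0, hN⟩]
      norm_num
    obtain ⟨i0, hi0⟩ : ∃ i, ‖⟪e i, f ⟨0, hN⟩⟫_ℂ‖ ≠ 0 := by
      by_contra h
      push_neg at h
      rw [Finset.sum_eq_zero (fun i _ => by rw [h i]; norm_num)] at hsum
      norm_num at hsum
    have : 0 < ‖⟪e i0, f ⟨0, hN⟩⟫_ℂ‖ := lt_of_le_of_ne (norm_nonneg _) (Ne.symm hi0)
    calc (0:ℝ) < ‖⟪e i0, f ⟨0, hN⟩⟫_ℂ‖ := this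
      _ ≤ c := le_ciSup hbdd (i0, ⟨0, hN⟩)
  -- probability distributions
  have hsa : ∑ i, ‖u i‖^2 = 1 := by
    rw [hu]
    simp only
    rw [parseval e ψ, hψ]
    norm_num
  have hsb : ∑ j, ‖⟪f j, ψ⟫_ℂ‖^2 = 1 := by
    rw [parseval f ψ, hψ]
    norm_num
  have happ := entropy_step N (fun i => ‖u i‖^2) (fun j => ‖⟪f j, ψ⟫_ℂ‖^2)
    (fun i => by positivity) (fun j => by positivity) hsa hsb c hcpos ?_
  · exact happ
  · intro θ h0 h1
    have := rt N M c hcpos.le hMle hM2 u θ h0 h1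
    have hbeq : ∀ j, (‖⟪f j, ψ⟫_ℂ‖^2 : ℝ) = ‖∑ i, M j i * u i‖^2 := fun j => by rw [hφ j]
    calc (∑ j, ((‖⟪f j, ψ⟫_ℂ‖^2 : ℝ)) ^ (1/(1-θ))) ^ ((1-θ)/2)
        = (∑ j, (‖∑ i, M j i * u i‖^2 : ℝ) ^ (1/(1-θ))) ^ ((1-θ)/2) := by
          congr 1
          exact Finset.sum_congr rfl fun j _ => by rw [hbeq j]
      _ ≤ c ^ θ * (∑ i, (‖u i‖^2 : ℝ) ^ (1/(1+θ))) ^ ((1+θ)/2) := this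
end

section
/- Let e = {e_0,…,e_{N−1}} be the standard orthonormal basis of ℂ^N and let f = {f_0,…,f_{N−1}} be the discrete Fourier basis, f_j = N^{−1/2}(e^{2πi jk/N})_{k=0}^{N−1}. Then for every unit vector ψ ∈ ℂ^N, the entropies satisfy H(ψ,e) + H(ψ,f) ≥ log N. -/
open scoped InnerProductSpace

section AuxiliaryLemmas
open Complex Finset

noncomputable def Complex.abs : AbsoluteValue ℂ ℝ := IsAbsoluteValue.toAbsoluteValue (norm : ℂ → ℝ)
lemma Complex.abs_apply (z : ℂ) : Complex.abs z = ‖z‖ := rfl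
lemma Complex.norm_eq_abs (z : ℂ) : ‖z‖ = Complex.abs z := rfl
lemma Complex.abs_conj (z : ℂ) : Complex.abs (starRingEnd ℂ z) = Complex.abs z := by
  simp [Complex.abs_apply]
lemma Complex.abs_ofReal (r : ℝ) : Complex.abs (r : ℂ) = |r| := by simp [Complex.abs_apply]
lemma Complex.abs_exp (z : ℂ) : Complex.abs (Complex.exp z) = Real.exp z.re := by
  simp [Complex.abs_apply, Complex.norm_exp]
lemma Complex.abs_exp_ofReal_mul_I (x : ℝ) : Complex.abs (Complex.exp (x * Complex.I)) = 1 := by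
  simp [Complex.abs_apply]
lemma Complex.normSq_eq_abs (z : ℂ) : Complex.normSq z = Complex.abs z ^ 2 := by
  simp [Complex.abs_apply, Complex.normSq_eq_norm_sq]

lemma sum_root_of_unity (N : ℕ) (hN : 0 < N) (m : ℤ) (hm1 : -(N:ℤ) < m) (hm2 : m < N) :
    ∑ k : Fin N, Complex.exp (2 * Real.pi * Complex.I * m * k / N) =
      if m = 0 then (N : ℂ) else 0 := by
  have hNne : (N:ℂ) ≠ 0 := Nat.cast_ne_zero.2 hN.ne'
  have hπ : (2 * (Real.pi:ℂ) * Complex.I) ≠ 0 := by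
    simp [Real.pi_ne_zero, Complex.I_ne_zero]
  have hz : ∀ k : Fin N, Complex.exp (2 * Real.pi * Complex.I * m * k / N)
      = Complex.exp (2 * Real.pi * Complex.I * m / N) ^ (k : ℕ) := by
    intro k
    rw [← Complex.exp_nat_mul]
    congr 1
    field_simp
  simp_rw [hz]
  set ζ := Complex.exp (2 * Real.pi * Complex.I * m / N) with hζ
  by_cases h0 : m = 0
  · subst h0
    simp [hζ]
  · rw [if_neg h0]
    have hζN : ζ ^ N = 1 := by
      rw [hζ, ← Complex.exp_nat_mul]
      have h : (N:ℂ) * (2 * Real.pi * Complex.I * m / N) = m * (2 * Real.pi * Complex.I) := by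
        field_simp
      rw [h, Complex.exp_int_mul_two_pi_mul_I]
    have hζ1 : ζ ≠ 1 := by
      rw [hζ]
      intro h
      rw [Complex.exp_eq_one_iff] at h
      obtain ⟨n, hn⟩ := h
      have h2 : (m : ℂ) = n * N := by
        have h4 : 2 * (Real.pi:ℂ) * Complex.I * m = (n * N) * (2 * Real.pi * Complex.I) := by
          field_simp at hn ⊢
          linear_combination hn
        have := mul_right_cancel₀ hπ (by linear_combination h4 : (m:ℂ) * (2 * Real.pi * Complex.I) = (n*N) * (2 * Real.pi * Complex.I))
        exact_mod_cast this
      have h3 : m = n * N := by exact_mod_cast h2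
      have hNZ : (0:ℤ) ≤ N := by positivity
      rcases lt_trichotomy n 0 with h | h | h
      · nlinarith [mul_le_mul_of_nonneg_right (show n ≤ -1 by omega) hNZ]
      · subst h; simp at h3; exact h0 h3
      · nlinarith [mul_le_mul_of_nonneg_right (show 1 ≤ n by omega) hNZ]
    rw [Fin.sum_univ_eq_sum_range, geom_sum_eq hζ1, hζN]
    simp

lemma fourier_orthonormal (N : ℕ) (hN : 0 < N) (f : Fin N → EuclideanSpace ℂ (Fin N))
    (hf : ∀ j k : Fin N, f j k =
      ((Real.sqrt N : ℂ))⁻¹ *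
        Complex.exp (2 * (Real.pi : ℂ) * Complex.I * ((j : ℕ) : ℂ) * ((k : ℕ) : ℂ) / (N : ℂ))) :
    Orthonormal ℂ f := by
  rw [orthonormal_iff_ite]
  intro j l
  have hsq : ((Real.sqrt N : ℂ))⁻¹ * ((Real.sqrt N : ℂ))⁻¹ = (N : ℂ)⁻¹ := by
    rw [← mul_inv, ← Complex.ofReal_mul, Real.mul_self_sqrt (by positivity : (0:ℝ) ≤ N)]
    simp
  have key : ∀ k : Fin N, ⟪f j, f l⟫_ℂ = 0 ∨ True := fun _ => Or.inr trivial
  have hinner : ⟪f j, f l⟫_ℂ = (N:ℂ)⁻¹ *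
      ∑ k : Fin N, Complex.exp (2 * Real.pi * Complex.I * ((((l:ℕ):ℤ) - ((j:ℕ):ℤ) : ℤ) : ℂ) * k / N) := by
    rw [PiLp.inner_apply, Finset.mul_sum]
    refine Finset.sum_congr rfl fun k _ => ?_
    simp only [RCLike.inner_apply]
    rw [hf j k, hf l k]
    rw [map_mul, ← Complex.exp_conj]
    have hconj1 : (starRingEnd ℂ) ((Real.sqrt N : ℂ))⁻¹ = ((Real.sqrt N : ℂ))⁻¹ := by
      simp
    have hconj2 : (starRingEnd ℂ) (2 * (Real.pi : ℂ) * Complex.I * ((j : ℕ) : ℂ) * ((k : ℕ) : ℂ) / (N : ℂ))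
        = -(2 * (Real.pi : ℂ) * Complex.I * ((j : ℕ) : ℂ) * ((k : ℕ) : ℂ) / (N : ℂ)) := by
      simp [map_div₀, map_mul, Complex.conj_I, Complex.conj_ofReal, map_ofNat]
      ring
    rw [hconj1, hconj2]
    rw [show ((Real.sqrt N : ℂ))⁻¹ * Complex.exp (2 * (Real.pi : ℂ) * Complex.I * ((l : ℕ) : ℂ) * ((k : ℕ) : ℂ) / (N : ℂ)) * (((Real.sqrt N : ℂ))⁻¹ * Complex.exp (-(2 * (Real.pi : ℂ) * Complex.I * ((j : ℕ) : ℂ) * ((k : ℕ) : ℂ) / (N : ℂ)))) = (((Real.sqrt N : ℂ))⁻¹ * ((Real.sqrt N : ℂ))⁻¹) * (Complex.exp (-(2 * (Real.pi : ℂ) * Complex.I * ((j : ℕ) : ℂ) * ((k : ℕ) : ℂ) / (N : ℂ))) * Complex.exp (2 * (Real.pi : ℂ) * Complex.I * ((l : ℕ) : ℂ) * ((k : ℕ) : ℂ) / (N : ℂ))) from by ring]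
    rw [hsq, ← Complex.exp_add]
    congr 1
    push_cast
    ring
  rw [hinner, sum_root_of_unity N hN _ (by omega) (by omega)]
  by_cases h : j = l
  · subst h; simp [Nat.cast_ne_zero.2 hN.ne']
  · have : ((l:ℕ):ℤ) - ((j:ℕ):ℤ) ≠ 0 := by
      have := Fin.val_ne_of_ne (Ne.symm h)
      omega
    rw [if_neg this, if_neg h, mul_zero]

lemma parseval_s1 (N : ℕ) (hN : 0 < N) (f : Fin N → EuclideanSpace ℂ (Fin N))
    (ho : Orthonormal ℂ f) (x : EuclideanSpace ℂ (Fin N)) :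
    ∑ j, ‖⟪f j, x⟫_ℂ‖ ^ 2 = ‖x‖ ^ 2 := by
  haveI : Nonempty (Fin N) := ⟨⟨0, hN⟩⟩
  have card : Fintype.card (Fin N) = Module.finrank ℂ (EuclideanSpace ℂ (Fin N)) := by
    simp [finrank_euclideanSpace]
  let b := basisOfOrthonormalOfCardEqFinrank ho card
  have hb : ⇑b = f := coe_basisOfOrthonormalOfCardEqFinrank ho card
  let ob := b.toOrthonormalBasis (by rwa [hb])
  have hob : ⇑ob = f := by rw [Module.Basis.coe_toOrthonormalBasis, hb]
  have h := ob.sum_inner_mul_inner x x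
  have h2 : ∀ j, ⟪x, ob j⟫_ℂ * ⟪ob j, x⟫_ℂ = (‖⟪f j, x⟫_ℂ‖ ^ 2 : ℝ) := by
    intro j
    rw [← inner_conj_symm (ob j) x, hob, Complex.mul_conj]
    norm_cast
    rw [Complex.normSq_eq_abs, ← Complex.norm_eq_abs]
    rw [← norm_inner_symm]
  have h3 : ((∑ j, ‖⟪f j, x⟫_ℂ‖ ^ 2 : ℝ) : ℂ) = ((‖x‖^2 : ℝ) : ℂ) := by
    rw [Complex.ofReal_sum]
    rw [show ∑ j, ((‖⟪f j, x⟫_ℂ‖ ^ 2 : ℝ) : ℂ) = ∑ j, ⟪x, ob j⟫_ℂ * ⟪ob j, x⟫_ℂ from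
      (Finset.sum_congr rfl fun j _ => (h2 j)).symm, h,
      inner_self_eq_norm_sq_to_K (𝕜 := ℂ)]
    push_cast
    norm_num
  exact_mod_cast h3

lemma rt_special (N : ℕ) (hN : 0 < N) (M : Fin N → Fin N → ℂ)
    (hM : ∀ j k, Complex.abs (M j k) = (Real.sqrt N)⁻¹)
    (hiso : ∀ a : Fin N → ℂ, ∑ j, Complex.abs (∑ k, M j k * a k) ^ 2
      = ∑ k, Complex.abs (a k) ^ 2)
    (a : Fin N → ℂ) (t : ℝ) (ht0 : 0 < t) (ht1 : t < 1) :
    (∑ j, Complex.abs (∑ k, M j k * a k) ^ (2/t : ℝ)) ^ (t/2 : ℝ) ≤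
      (N:ℝ) ^ ((t-1)/2 : ℝ) * (∑ k, Complex.abs (a k) ^ (2/(2-t) : ℝ)) ^ ((2-t)/2 : ℝ) := by
  have h2t : (0:ℝ) < 2 - t := by linarith
  set p : ℝ := 2/(2-t) with hpdef
  set q : ℝ := 2/t with hqdef
  have hp0 : 0 < p := by positivity
  have hq0 : 0 < q := by positivity
  have hq2 : 2 < q := by
    rw [hqdef, lt_div_iff₀ ht0]; linarith
  have hq1 : 1 < q := by linarith
  have hpq : (q-1)*p = q := by
    rw [hpdef, hqdef]; field_simp
  have hpt : p*(1-t/2) = 1 := by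
    rw [hpdef]; field_simp
  set c : Fin N → ℂ := fun j => ∑ k, M j k * a k with hcdef
  set u : Fin N → ℝ := fun k => Complex.abs (a k) with hudef
  set v : Fin N → ℝ := fun j => Complex.abs (c j) with hvdef
  have hu0 : ∀ k, 0 ≤ u k := fun k => Complex.abs.nonneg _
  have hv0 : ∀ j, 0 ≤ v j := fun j => Complex.abs.nonneg _
  set w : Fin N → ℝ := fun j => v j ^ (q-1 : ℝ) with hwdef
  have hw0 : ∀ j, 0 ≤ w j := fun j => Real.rpow_nonneg (hv0 j) _
  set b : Fin N → ℂ := fun j => (starRingEnd ℂ) (c j) * ((v j ^ (q-2:ℝ) : ℝ) : ℂ) with hbdef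
  set V : ℝ := ∑ j, v j ^ (q:ℝ) with hVdef
  set A : ℝ := ∑ k, u k ^ (p:ℝ) with hAdef
  have hV0 : 0 ≤ V := Finset.sum_nonneg fun j _ => Real.rpow_nonneg (hv0 j) _
  have hA0 : 0 ≤ A := Finset.sum_nonneg fun k _ => Real.rpow_nonneg (hu0 k) _
  show V ^ (t/2 : ℝ) ≤ (N:ℝ) ^ ((t-1)/2 : ℝ) * A ^ ((2-t)/2 : ℝ)
  by_cases hV : V = 0
  · rw [hV, Real.zero_rpow (by positivity)]
    positivity
  have hVpos : 0 < V := lt_of_le_of_ne hV0 (Ne.symm hV)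
  have hApos : 0 < A := by
    rcases eq_or_lt_of_le hA0 with h | h
    · exfalso
      have ha0 : ∀ k, a k = 0 := by
        intro k
        have := (Finset.sum_eq_zero_iff_of_nonneg
          (fun k _ => Real.rpow_nonneg (hu0 k) _)).1 h.symm k (mem_univ k)
        have huk : u k = 0 := by
          by_contra hne
          exact hne (by
            have := Real.rpow_eq_zero_iff_of_nonneg (hu0 k) |>.1 this
            exact this.1)
        simpa [hudef, Complex.abs.eq_zero] using huk
      have hc0 : ∀ j, c j = 0 := by
        intro j; rw [hcdef]; simp [ha0]
      have : V = 0 := by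
        rw [hVdef]
        apply Finset.sum_eq_zero
        intro j _
        rw [hvdef]
        simp [hc0 j]
        exact Real.zero_rpow (by positivity)
      exact hV this
    · exact h
  -- basic facts about b and w
  have hwv : ∀ j, v j = 0 → w j = 0 := by
    intro j h; rw [hwdef]; simp only [h]; exact Real.zero_rpow (by linarith)
  have hvw : ∀ j, w j = 0 → v j = 0 := by
    intro j h
    rw [hwdef] at h
    exact (Real.rpow_eq_zero_iff_of_nonneg (hv0 j)).1 h |>.1
  have habs_b : ∀ j, Complex.abs (b j) = w j := by
    intro j
    rw [hbdef]
    simp only [map_mul, Complex.abs_conj, Complex.abs_ofReal]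
    rw [_root_.abs_of_nonneg (Real.rpow_nonneg (hv0 j) _)]
    rcases eq_or_lt_of_le (hv0 j) with h | h
    · rw [hwdef]; simp only [← h]
      rw [Real.zero_rpow (by linarith), Real.zero_rpow (by linarith), mul_zero]
    · rw [hwdef]
      show v j * v j ^ (q-2) = v j ^ (q-1)
      rw [show q - 1 = 1 + (q-2) by ring, Real.rpow_add h, Real.rpow_one]
  have hbc : ∀ j, b j * c j = ((v j ^ (q:ℝ) : ℝ) : ℂ) := by
    intro j
    rcases eq_or_lt_of_le (hv0 j) with h | h
    · have hcj : c j = 0 := Complex.abs.eq_zero.1 h.symm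
      rw [hbdef]
      simp only [hcj, mul_zero, map_zero, zero_mul]
      rw [← h, Real.zero_rpow (by positivity), Complex.ofReal_zero]
    · calc b j * c j = (c j * (starRingEnd ℂ) (c j)) * ((v j^(q-2:ℝ) : ℝ) : ℂ) := by
            rw [hbdef]; ring
        _ = ((Complex.abs (c j)^2 * v j^(q-2:ℝ) : ℝ) : ℂ) := by
            rw [Complex.mul_conj, Complex.normSq_eq_abs]; push_cast; ring
        _ = ((v j ^ (q:ℝ) : ℝ) : ℂ) := by
            congr 1
            show v j ^ (2:ℕ) * v j ^ (q-2:ℝ) = v j ^ (q:ℝ)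
            rw [← Real.rpow_natCast (v j) 2, ← Real.rpow_add h]
            norm_num
  have hwp : ∀ j, w j ^ (p:ℝ) = v j ^ (q:ℝ) := by
    intro j
    show (v j ^ (q-1:ℝ)) ^ (p:ℝ) = v j ^ (q:ℝ)
    rw [← Real.rpow_mul (hv0 j), hpq]
  -- the analytic family
  classical
  set A' : Fin N → ℂ → ℂ := fun k z => if u k = 0 then 0 else
    Complex.exp (((p * Real.log (u k) : ℝ) : ℂ) * (1 - z/2)) * (a k / ((u k : ℝ) : ℂ)) with hA'def
  set B' : Fin N → ℂ → ℂ := fun j z => if w j = 0 then 0 else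
    Complex.exp (((p * Real.log (w j) : ℝ) : ℂ) * (1 - z/2)) * (b j / ((w j : ℝ) : ℂ)) with hB'def
  set F : ℂ → ℂ := fun z => ∑ j, B' j z * ∑ k, M j k * A' k z with hFdef
  -- absolute values on the strip
  have habs_gen : ∀ (x0 : ℝ) (g : ℂ) (hx0 : 0 ≤ x0) (z : ℂ), z.re ≤ 1 →
      (∀ hg : x0 ≠ 0, Complex.abs g = x0) →
      Complex.abs ((if x0 = 0 then (0:ℂ) else
        Complex.exp (((p * Real.log x0 : ℝ) : ℂ) * (1 - z/2)) * (g / ((x0 : ℝ) : ℂ))))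
        = x0 ^ (p * (1 - z.re/2)) := by
    intro x0 g hx0 z hz hg
    have hexp : 0 < p * (1 - z.re/2) := by
      apply mul_pos hp0; linarith
    by_cases h : x0 = 0
    · rw [if_pos h, h, Real.zero_rpow (ne_of_gt hexp), map_zero]
    · rw [if_neg h]
      have hx0pos : 0 < x0 := lt_of_le_of_ne hx0 (Ne.symm h)
      rw [map_mul, Complex.abs_exp, map_div₀, hg h, Complex.abs_ofReal,
        _root_.abs_of_pos hx0pos, div_self (ne_of_gt hx0pos), mul_one]
      rw [Complex.re_ofReal_mul]
      rw [Real.rpow_def_of_pos hx0pos]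
      congr 1
      have : (1 - z/2).re = 1 - z.re/2 := by simp
      rw [this]; ring
  have habsA : ∀ (k : Fin N) (z : ℂ), z.re ≤ 1 →
      Complex.abs (A' k z) = u k ^ (p * (1 - z.re/2)) := by
    intro k z hz
    exact habs_gen (u k) (a k) (hu0 k) z hz (fun _ => rfl)
  have habsB : ∀ (j : Fin N) (z : ℂ), z.re ≤ 1 →
      Complex.abs (B' j z) = w j ^ (p * (1 - z.re/2)) := by
    intro j z hz
    exact habs_gen (w j) (b j) (hw0 j) z hz (fun _ => habs_b j)
  -- value at z = t
  have hval_gen : ∀ (x0 : ℝ) (g : ℂ), 0 ≤ x0 → (x0 = 0 → g = 0) →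
      (if x0 = 0 then (0:ℂ) else
        Complex.exp (((p * Real.log x0 : ℝ) : ℂ) * (1 - (t:ℂ)/2)) * (g / ((x0 : ℝ) : ℂ))) = g := by
    intro x0 g hx0 hg0
    by_cases h : x0 = 0
    · rw [if_pos h, hg0 h]
    · rw [if_neg h]
      have hx0pos : 0 < x0 := lt_of_le_of_ne hx0 (Ne.symm h)
      have h1 : (1 - (t:ℂ)/2) = ((1 - t/2 : ℝ) : ℂ) := by push_cast; ring
      rw [h1, ← Complex.ofReal_mul, show p * Real.log x0 * (1 - t/2) = Real.log x0 by
        linear_combination (Real.log x0) * hpt]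
      rw [← Complex.ofReal_exp, Real.exp_log hx0pos]
      have hne : ((x0:ℝ):ℂ) ≠ 0 := Complex.ofReal_ne_zero.2 h
      rw [mul_comm, div_mul_eq_mul_div, mul_div_assoc, div_self hne, mul_one]
  have hAt : ∀ k, A' k (t:ℂ) = a k := by
    intro k
    exact hval_gen (u k) (a k) (hu0 k) (fun h => Complex.abs.eq_zero.1 h)
  have hBt : ∀ j, B' j (t:ℂ) = b j := by
    intro j
    refine hval_gen (w j) (b j) (hw0 j) (fun h => ?_)
    have hvj : v j = 0 := hvw j h
    have hcj : c j = 0 := Complex.abs.eq_zero.1 hvj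
    rw [hbdef]; simp [hcj]
  have hFt : F (t:ℂ) = ((V : ℝ) : ℂ) := by
    have hsum : ∀ j, ∑ k, M j k * A' k (t:ℂ) = c j := fun j =>
      Finset.sum_congr rfl fun k _ => by rw [hAt k]
    calc F (t:ℂ) = ∑ j, b j * c j := Finset.sum_congr rfl fun j _ => by rw [hBt j, hsum j]
      _ = ∑ j, ((v j ^ (q:ℝ) : ℝ) : ℂ) := Finset.sum_congr rfl fun j _ => hbc j
      _ = ((V:ℝ):ℂ) := by rw [hVdef]; push_cast; rfl
  -- differentiability
  have hdiffF : Differentiable ℂ F := by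
    rw [hFdef]
    refine Differentiable.fun_sum fun j _ => Differentiable.mul ?_ (Differentiable.fun_sum fun k _ =>
      Differentiable.const_mul ?_ _)
    · by_cases h : w j = 0
      · simp only [hB'def, if_pos h]
        exact differentiable_const 0
      · simp only [hB'def, if_neg h]
        apply Differentiable.mul_const
        apply Differentiable.cexp
        apply Differentiable.const_mul
        exact (differentiable_id.div_const 2).const_sub 1
    · by_cases h : u k = 0
      · simp only [hA'def, if_pos h]
        exact differentiable_const 0
      · simp only [hA'def, if_neg h]
        apply Differentiable.mul_const
        apply Differentiable.cexp
        apply Differentiable.const_mul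
        exact (differentiable_id.div_const 2).const_sub 1
  -- generic bound
  have hFle : ∀ z : ℂ, z.re ≤ 1 →
      Complex.abs (F z) ≤ (∑ j, w j ^ (p*(1-z.re/2))) *
        ((Real.sqrt N)⁻¹ * ∑ k, u k ^ (p*(1-z.re/2))) := by
    intro z h1
    have hC : ∀ j, Complex.abs (∑ k, M j k * A' k z) ≤
        (Real.sqrt N)⁻¹ * ∑ k, u k ^ (p*(1-z.re/2)) := by
      intro j
      refine (Complex.abs.sum_le _ _).trans ?_
      rw [Finset.mul_sum]
      refine Finset.sum_le_sum fun k _ => ?_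
      rw [map_mul, hM j k, habsA k z h1]
    calc Complex.abs (F z) ≤ ∑ j, Complex.abs (B' j z * ∑ k, M j k * A' k z) :=
          Complex.abs.sum_le _ _
      _ = ∑ j, Complex.abs (B' j z) * Complex.abs (∑ k, M j k * A' k z) := by
          simp only [map_mul]
      _ ≤ ∑ j, w j ^ (p*(1-z.re/2)) * ((Real.sqrt N)⁻¹ * ∑ k, u k ^ (p*(1-z.re/2))) := by
          refine Finset.sum_le_sum fun j _ => ?_
          rw [habsB j z h1]
          exact mul_le_mul_of_nonneg_left (hC j) (Real.rpow_nonneg (hw0 j) _)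
      _ = (∑ j, w j ^ (p*(1-z.re/2))) * ((Real.sqrt N)⁻¹ * ∑ k, u k ^ (p*(1-z.re/2))) := by
          rw [← Finset.sum_mul]
  have hsqrtNpos : (0:ℝ) < Real.sqrt N := Real.sqrt_pos.2 (by positivity)
  -- boundedness on the strip
  have hbdd : BddAbove ((norm ∘ F) '' (Complex.HadamardThreeLines.verticalClosedStrip 0 1)) := by
    refine ⟨(∑ j, (1 + w j) ^ (p:ℝ)) * ((Real.sqrt N)⁻¹ * ∑ k, (1 + u k) ^ (p:ℝ)), ?_⟩
    rintro x ⟨z, hz, rfl⟩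
    simp only [Function.comp_apply, Complex.norm_eq_abs]
    have hz' : z.re ∈ Set.Icc (0:ℝ) 1 := hz
    have h1 : z.re ≤ 1 := hz'.2
    have h0 : 0 ≤ z.re := hz'.1
    have hterm : ∀ (x0 : ℝ), 0 ≤ x0 → x0 ^ (p*(1-z.re/2)) ≤ (1+x0) ^ (p:ℝ) := by
      intro x0 hx0
      have he0 : 0 ≤ p*(1-z.re/2) := mul_nonneg hp0.le (by linarith)
      calc x0 ^ (p*(1-z.re/2)) ≤ (1+x0) ^ (p*(1-z.re/2)) :=
            Real.rpow_le_rpow hx0 (by linarith) he0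
        _ ≤ (1+x0) ^ (p:ℝ) :=
            Real.rpow_le_rpow_of_exponent_le (by linarith) (by nlinarith)
    refine (hFle z h1).trans ?_
    refine mul_le_mul (Finset.sum_le_sum fun j _ => hterm (w j) (hw0 j))
      (mul_le_mul_of_nonneg_left (Finset.sum_le_sum fun k _ => hterm (u k) (hu0 k))
        (by positivity)) (by positivity) ?_
    exact Finset.sum_nonneg fun j _ => Real.rpow_nonneg (by linarith [hw0 j]) _
  -- boundary bounds
  have hx0bound : ∀ z ∈ Complex.re ⁻¹' {0}, ‖F z‖ ≤ V * ((Real.sqrt N)⁻¹ * A) := by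
    intro z hz
    have hzre : z.re = 0 := hz
    have := hFle z (by rw [hzre]; norm_num)
    rw [hzre] at this
    simp only [Complex.norm_eq_abs]
    refine this.trans (le_of_eq ?_)
    have hep : p * (1 - 0/2) = p := by ring
    rw [hep, hVdef, hAdef]
    congr 1
    exact Finset.sum_congr rfl fun j _ => hwp j
  have hx1bound : ∀ z ∈ Complex.re ⁻¹' {1}, ‖F z‖ ≤ Real.sqrt (V * A) := by
    intro z hz
    have hzre : z.re = 1 := hz
    have hep : p * (1 - z.re/2) = p/2 := by rw [hzre]; ring
    have hB2 : ∀ j, Complex.abs (B' j z) ^ 2 = w j ^ (p:ℝ) := by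
      intro j
      rw [habsB j z (by rw [hzre]), hep, ← Real.rpow_natCast (w j ^ (p/2:ℝ)) 2,
        ← Real.rpow_mul (hw0 j)]
      norm_num
    have hA2 : ∀ k, Complex.abs (A' k z) ^ 2 = u k ^ (p:ℝ) := by
      intro k
      rw [habsA k z (by rw [hzre]), hep, ← Real.rpow_natCast (u k ^ (p/2:ℝ)) 2,
        ← Real.rpow_mul (hu0 k)]
      norm_num
    simp only [Complex.norm_eq_abs]
    calc Complex.abs (F z) ≤ ∑ j, Complex.abs (B' j z) * Complex.abs (∑ k, M j k * A' k z) := by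
          refine (Complex.abs.sum_le _ _).trans (le_of_eq ?_)
          simp only [map_mul]
      _ ≤ Real.sqrt (∑ j, Complex.abs (B' j z) ^ 2) *
            Real.sqrt (∑ j, Complex.abs (∑ k, M j k * A' k z) ^ 2) :=
          Real.sum_mul_le_sqrt_mul_sqrt _ _ _
      _ = Real.sqrt V * Real.sqrt A := by
          rw [hiso (fun k => A' k z)]
          congr 1
          · congr 1
            rw [hVdef]
            exact (Finset.sum_congr rfl fun j _ => (hB2 j).trans (hwp j))
          · congr 1
            rw [hAdef]
            exact (Finset.sum_congr rfl fun k _ => hA2 k)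
      _ = Real.sqrt (V * A) := (Real.sqrt_mul hV0 _).symm
  -- apply Hadamard three lines
  have hmem : (t:ℂ) ∈ Complex.HadamardThreeLines.verticalClosedStrip 0 1 := by
    show (t:ℂ).re ∈ Set.Icc (0:ℝ) 1
    rw [Complex.ofReal_re]
    exact ⟨ht0.le, ht1.le⟩
  have h3l := Complex.HadamardThreeLines.norm_le_interp_of_mem_verticalClosedStrip₀₁' F hmem
    hdiffF.diffContOnCl hbdd hx0bound hx1bound
  rw [hFt, Complex.norm_real, Real.norm_eq_abs, _root_.abs_of_pos hVpos,
    Complex.ofReal_re] at h3l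
  -- final algebra
  have hVA : 0 < V * A := mul_pos hVpos hApos
  have hkey : V ≤ (Real.sqrt N)⁻¹ ^ (1-t : ℝ) * (V*A) ^ (1-t/2 : ℝ) := by
    refine h3l.trans (le_of_eq ?_)
    rw [show V * ((Real.sqrt N)⁻¹ * A) = (Real.sqrt N)⁻¹ * (V * A) by ring]
    rw [Real.mul_rpow (by positivity) hVA.le, Real.sqrt_eq_rpow, mul_assoc, Real.sqrt_eq_rpow,
      ← Real.rpow_mul hVA.le, ← Real.rpow_add hVA]
    congr 1
    ring
  -- from hkey to the goal
  have hsplitV : V = V ^ (t/2:ℝ) * V ^ (1-t/2:ℝ) := by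
    rw [← Real.rpow_add hVpos]
    norm_num
  have hsplitVA : (V*A) ^ (1-t/2:ℝ) = V ^ (1-t/2:ℝ) * A ^ (1-t/2:ℝ) :=
    Real.mul_rpow hV0 hA0
  have hNs : (Real.sqrt N)⁻¹ ^ (1-t : ℝ) = (N:ℝ) ^ ((t-1)/2 : ℝ) := by
    rw [Real.sqrt_eq_rpow, ← Real.rpow_neg_one ((N:ℝ) ^ ((1:ℝ)/2)),
      ← Real.rpow_mul (by positivity), ← Real.rpow_mul (by positivity)]
    congr 1
    ring
  have hfin : V ^ (t/2:ℝ) * V ^ (1-t/2:ℝ) ≤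
      ((N:ℝ) ^ ((t-1)/2 : ℝ) * A ^ (1-t/2:ℝ)) * V ^ (1-t/2:ℝ) := by
    calc V ^ (t/2:ℝ) * V ^ (1-t/2:ℝ) = V := hsplitV.symm
      _ ≤ (Real.sqrt N)⁻¹ ^ (1-t : ℝ) * (V*A) ^ (1-t/2 : ℝ) := hkey
      _ = ((N:ℝ) ^ ((t-1)/2 : ℝ) * A ^ (1-t/2:ℝ)) * V ^ (1-t/2:ℝ) := by
          rw [hNs, hsplitVA]; ring
  have := (mul_le_mul_iff_of_pos_right (Real.rpow_pos_of_pos hVpos (1-t/2:ℝ))).1 hfin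
  refine this.trans (le_of_eq ?_)
  congr 1
  ring



lemma hasDerivAt_rpow_exponent (v : ℝ) (hv : 0 ≤ v) (r : ℝ) (hr : 0 < r) :
    HasDerivAt (fun s : ℝ => v ^ s) (v ^ r * Real.log v) r := by
  rcases eq_or_lt_of_le hv with h | h
  · have heq : (fun s : ℝ => v ^ s) =ᶠ[nhds r] (fun _ => (0:ℝ)) := by
      filter_upwards [Ioi_mem_nhds hr] with s hs
      rw [← h, Real.zero_rpow (ne_of_gt hs)]
    have h0 : v ^ r * Real.log v = 0 := by
      rw [← h, Real.log_zero, mul_zero]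
    rw [h0]
    exact (hasDerivAt_const r 0).congr_of_eventuallyEq heq
  · have : (fun s : ℝ => v ^ s) = fun s => Real.exp (Real.log v * s) := by
      funext s
      rw [Real.rpow_def_of_pos h, mul_comm]
    rw [this]
    have hd : HasDerivAt (fun s : ℝ => Real.log v * s) (Real.log v) r := by
      simpa using (hasDerivAt_id r).const_mul (Real.log v)
    have := hd.exp
    convert this using 1
    rw [Real.rpow_def_of_pos h, mul_comm (Real.log v) r]

lemma deriv_nonneg_of_left_max {φ : ℝ → ℝ} {d : ℝ} (h : HasDerivAt φ d 1) (h0 : φ 1 = 0)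
    (hle : ∀ t : ℝ, 0 < t → t < 1 → φ t ≤ 0) : 0 ≤ d := by
  have hs := hasDerivAt_iff_tendsto_slope.1 h
  have hmono : nhdsWithin (1:ℝ) (Set.Iio 1) ≤ nhdsWithin (1:ℝ) {(1:ℝ)}ᶜ :=
    nhdsWithin_mono _ (fun y hy => ne_of_lt hy)
  have hs' := hs.mono_left hmono
  refine ge_of_tendsto hs' ?_
  filter_upwards [Ioo_mem_nhdsLT_of_mem (by norm_num : (1:ℝ) ∈ Set.Ioc (0:ℝ) 1)] with y hy
  rw [slope_def_field]
  rw [h0]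
  have h1 : φ y ≤ 0 := hle y hy.1 hy.2
  have h2 : y - 1 < 0 := by linarith [hy.2]
  exact div_nonneg_of_nonpos (by linarith) h2.le

end AuxiliaryLemmas

open Complex Finset in
/-- For the standard basis `e` of `ℂ^N` and the discrete Fourier basis
`f_j = N^{-1/2}(e^{2πi jk/N})_k`, every unit vector `ψ` satisfies
`H(ψ,e) + H(ψ,f) ≥ log N`. -/
theorem entropic_uncertainty_fourier (N : ℕ) (hN : 0 < N)
    (e f : Fin N → EuclideanSpace ℂ (Fin N))
    (he : ∀ i, e i = EuclideanSpace.single i 1)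
    (hf : ∀ j k : Fin N, f j k =
      ((Real.sqrt N : ℂ))⁻¹ *
        Complex.exp (2 * (Real.pi : ℂ) * Complex.I * ((j : ℕ) : ℂ) * ((k : ℕ) : ℂ) / (N : ℂ)))
    (ψ : EuclideanSpace ℂ (Fin N)) (hψ : ‖ψ‖ = 1) :
    (∑ i, eta (‖⟪e i, ψ⟫_ℂ‖ ^ 2)) + (∑ j, eta (‖⟪f j, ψ⟫_ℂ‖ ^ 2)) ≥ Real.log N := by
  have horth : Orthonormal ℂ f := fourier_orthonormal N hN f hf
  set M : Fin N → Fin N → ℂ := fun j k => (starRingEnd ℂ) (f j k) with hMdef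
  have hinner_sum : ∀ x : EuclideanSpace ℂ (Fin N), ∀ j,
      ⟪f j, x⟫_ℂ = ∑ k, M j k * x k := by
    intro x j
    rw [PiLp.inner_apply]
    exact Finset.sum_congr rfl fun k _ => by rw [RCLike.inner_apply, hMdef]; exact mul_comm _ _
  have hM : ∀ j k, Complex.abs (M j k) = (Real.sqrt N)⁻¹ := by
    intro j k
    rw [hMdef]
    simp only
    rw [Complex.abs_conj, hf j k, map_mul]
    have h1 : Complex.abs ((Real.sqrt N : ℂ))⁻¹ = (Real.sqrt N)⁻¹ := by
      rw [map_inv₀, Complex.abs_ofReal, _root_.abs_of_nonneg (Real.sqrt_nonneg _)]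
    have h2 : Complex.abs (Complex.exp (2 * (Real.pi:ℂ) * Complex.I * ((j:ℕ):ℂ) * ((k:ℕ):ℂ) / (N:ℂ))) = 1 := by
      have heq : (2 * (Real.pi:ℂ) * Complex.I * ((j:ℕ):ℂ) * ((k:ℕ):ℂ) / (N:ℂ))
          = ((2 * Real.pi * (j:ℕ) * (k:ℕ) / (N:ℕ) : ℝ) : ℂ) * Complex.I := by
        push_cast; ring
      rw [heq, Complex.abs_exp_ofReal_mul_I]
    rw [h1, h2, mul_one]
  have hiso : ∀ a : Fin N → ℂ, ∑ j, Complex.abs (∑ k, M j k * a k) ^ 2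
      = ∑ k, Complex.abs (a k) ^ 2 := by
    intro a
    set x : EuclideanSpace ℂ (Fin N) := (WithLp.equiv 2 (Fin N → ℂ)).symm a with hxdef
    have hxk : ∀ k, x k = a k := fun k => rfl
    have h1 : ∀ j, (∑ k, M j k * a k) = ⟪f j, x⟫_ℂ := by
      intro j
      rw [hinner_sum x j]
      exact Finset.sum_congr rfl fun k _ => by rw [hxk]
    have h2 := parseval_s1 N hN f horth x
    have h3 : ‖x‖ ^ 2 = ∑ k, Complex.abs (a k) ^ 2 := by
      rw [EuclideanSpace.norm_eq, Real.sq_sqrt (Finset.sum_nonneg fun k _ => by positivity)]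
      exact Finset.sum_congr rfl fun k _ => by rw [hxk, Complex.norm_eq_abs]
    rw [← h3, ← h2]
    exact Finset.sum_congr rfl fun j _ => by rw [h1 j, Complex.norm_eq_abs]
  -- the u, v functions
  set u : Fin N → ℝ := fun k => Complex.abs (ψ k) with hudef
  set v : Fin N → ℝ := fun j => Complex.abs (⟪f j, ψ⟫_ℂ) with hvdef
  have hu0 : ∀ k, 0 ≤ u k := fun k => Complex.abs.nonneg _
  have hv0 : ∀ j, 0 ≤ v j := fun j => Complex.abs.nonneg _
  set S : ℝ → ℝ := fun r => ∑ j, v j ^ (r:ℝ) with hSdef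
  set T : ℝ → ℝ := fun r => ∑ k, u k ^ (r:ℝ) with hTdef
  have hS2 : S 2 = 1 := by
    have hpar := parseval_s1 N hN f horth ψ
    rw [hψ, one_pow] at hpar
    have h4 : S 2 = ∑ j, ‖⟪f j, ψ⟫_ℂ‖ ^ 2 := by
      refine Finset.sum_congr rfl fun j _ => ?_
      rw [show (2:ℝ) = ((2:ℕ):ℝ) by norm_num, Real.rpow_natCast]
      rfl
    rw [h4, hpar]
  have hT2 : T 2 = 1 := by
    have hn : ‖ψ‖ ^ 2 = ∑ k, ‖ψ k‖ ^ 2 := by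
      rw [EuclideanSpace.norm_eq, Real.sq_sqrt (Finset.sum_nonneg fun k _ => by positivity)]
    rw [hψ, one_pow] at hn
    have h4 : T 2 = ∑ k, ‖ψ k‖ ^ 2 := by
      refine Finset.sum_congr rfl fun k _ => ?_
      rw [show (2:ℝ) = ((2:ℕ):ℝ) by norm_num, Real.rpow_natCast]
      rfl
    rw [h4, ← hn]
  have hSpos : ∀ r : ℝ, 0 < r → 0 < S r := by
    intro r hr
    obtain ⟨j0, hj0⟩ : ∃ j, v j ≠ 0 := by
      by_contra h
      push_neg at h
      have : S 2 = 0 := Finset.sum_eq_zero fun j _ => by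
        rw [h j, Real.zero_rpow (by norm_num)]
      rw [hS2] at this; norm_num at this
    have hvj0 : 0 < v j0 := lt_of_le_of_ne (hv0 j0) (Ne.symm hj0)
    refine lt_of_lt_of_le (Real.rpow_pos_of_pos hvj0 r) ?_
    exact Finset.single_le_sum (fun j _ => Real.rpow_nonneg (hv0 j) r) (mem_univ j0)
  have hTpos : ∀ r : ℝ, 0 < r → 0 < T r := by
    intro r hr
    obtain ⟨k0, hk0⟩ : ∃ k, u k ≠ 0 := by
      by_contra h
      push_neg at h
      have : T 2 = 0 := Finset.sum_eq_zero fun k _ => by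
        rw [h k, Real.zero_rpow (by norm_num)]
      rw [hT2] at this; norm_num at this
    have huk0 : 0 < u k0 := lt_of_le_of_ne (hu0 k0) (Ne.symm hk0)
    refine lt_of_lt_of_le (Real.rpow_pos_of_pos huk0 r) ?_
    exact Finset.single_le_sum (fun k _ => Real.rpow_nonneg (hu0 k) r) (mem_univ k0)
  -- the function φ
  set φ : ℝ → ℝ := fun s => (s/2) * Real.log (S (2/s)) - ((s-1)/2) * Real.log N -
    ((2-s)/2) * Real.log (T (2/(2-s))) with hφdef
  have hφ1 : φ 1 = 0 := by
    rw [hφdef]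
    simp only
    norm_num
    rw [hS2, hT2, Real.log_one]
    ring
  have hφle : ∀ t : ℝ, 0 < t → t < 1 → φ t ≤ 0 := by
    intro t ht0 ht1
    have h2t : (0:ℝ) < 2 - t := by linarith
    have key := rt_special N hN M hM hiso (fun k => ψ k) t ht0 ht1
    have hSq : (∑ j, Complex.abs (∑ k, M j k * (fun k => ψ k) k) ^ (2/t : ℝ)) = S (2/t) := by
      refine Finset.sum_congr rfl fun j _ => ?_
      have h5 : (∑ k, M j k * (fun k => ψ k) k) = ⟪f j, ψ⟫_ℂ := (hinner_sum ψ j).symm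
      rw [h5]
    have hTp : (∑ k, Complex.abs ((fun k => ψ k) k) ^ (2/(2-t) : ℝ)) = T (2/(2-t)) := rfl
    rw [hSq, hTp] at key
    have hSqpos : 0 < S (2/t) := hSpos _ (by positivity)
    have hTppos : 0 < T (2/(2-t)) := hTpos _ (by positivity)
    have hlhs : 0 < S (2/t) ^ (t/2 : ℝ) := Real.rpow_pos_of_pos hSqpos _
    have hlog := Real.log_le_log hlhs key
    rw [Real.log_rpow hSqpos, Real.log_mul (by positivity) (by positivity),
      Real.log_rpow (by positivity : (0:ℝ) < (N:ℝ)), Real.log_rpow hTppos] at hlog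
    rw [hφdef]
    simp only
    linarith
  -- derivative of φ at 1
  set S2' : ℝ := ∑ j, v j ^ (2:ℝ) * Real.log (v j) with hS2'def
  set T2' : ℝ := ∑ k, u k ^ (2:ℝ) * Real.log (u k) with hT2'def
  have hS : HasDerivAt S S2' 2 := by
    rw [hSdef, hS2'def]
    exact HasDerivAt.fun_sum fun j _ => hasDerivAt_rpow_exponent (v j) (hv0 j) 2 (by norm_num)
  have hT : HasDerivAt T T2' 2 := by
    rw [hTdef, hT2'def]
    exact HasDerivAt.fun_sum fun k _ => hasDerivAt_rpow_exponent (u k) (hu0 k) 2 (by norm_num)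
  have hq : HasDerivAt (fun s : ℝ => 2/s) (-2 : ℝ) 1 := by
    have h1 : HasDerivAt (fun s : ℝ => 2 * s⁻¹) (2 * -((1:ℝ) ^ 2)⁻¹) 1 := (hasDerivAt_inv (one_ne_zero : (1:ℝ) ≠ 0)).const_mul (2:ℝ)
    have h2 : (fun s : ℝ => 2 * s⁻¹) = fun s : ℝ => 2/s := by
      funext s; rw [div_eq_mul_inv]
    rw [h2] at h1
    convert h1 using 1
    norm_num
  have hp : HasDerivAt (fun s : ℝ => 2/(2-s)) (2 : ℝ) 1 := by
    have h0 : HasDerivAt (fun s : ℝ => 2 - s) (-1 : ℝ) 1 := by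
      simpa using (hasDerivAt_id (1:ℝ)).const_sub 2
    have h1 : HasDerivAt (fun s : ℝ => 2 * (2-s)⁻¹) (2 * (- -1 / (2 - 1) ^ 2)) 1 := (h0.inv (by norm_num)).const_mul (2:ℝ)
    have h2 : (fun s : ℝ => 2 * (2-s)⁻¹) = fun s : ℝ => 2/(2-s) := by
      funext s; rw [div_eq_mul_inv]
    rw [h2] at h1
    convert h1 using 1
    norm_num
  have hS' : HasDerivAt S S2' (2/1 : ℝ) := by
    rw [show (2:ℝ)/1 = 2 by norm_num]
    exact hS
  have hSq1 : HasDerivAt (fun s : ℝ => S (2/s)) (S2' * -2) 1 := by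
    have h : HasDerivAt (fun s : ℝ => S (2/s)) (S2' * -2) 1 := hS'.comp 1 hq
    simpa [Function.comp] using h
  have hT' : HasDerivAt T T2' (2/(2-1) : ℝ) := by
    rw [show (2:ℝ)/(2-1) = 2 by norm_num]
    exact hT
  have hTp1 : HasDerivAt (fun s : ℝ => T (2/(2-s))) (T2' * 2) 1 := by
    have h : HasDerivAt (fun s : ℝ => T (2/(2-s))) (T2' * 2) 1 :=
      HasDerivAt.comp (h₂ := T) (h := fun s : ℝ => 2/(2-s)) 1 hT' hp
    simpa [Function.comp] using h
  have hS21 : S (2/1 : ℝ) = 1 := by rw [show (2:ℝ)/1 = 2 by norm_num]; exact hS2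
  have hT21 : T (2/(2-1) : ℝ) = 1 := by rw [show (2:ℝ)/(2-1) = 2 by norm_num]; exact hT2
  have hlogS : HasDerivAt (fun s : ℝ => Real.log (S (2/s))) ((S2' * -2) / S (2/1 : ℝ)) 1 := by
    refine hSq1.log ?_
    show S (2/1 : ℝ) ≠ 0
    rw [hS21]; norm_num
  have hlogT : HasDerivAt (fun s : ℝ => Real.log (T (2/(2-s)))) ((T2' * 2) / T (2/(2-1) : ℝ)) 1 := by
    refine hTp1.log ?_
    show T (2/(2-1) : ℝ) ≠ 0
    rw [hT21]; norm_num
  have hterm1 : HasDerivAt (fun s : ℝ => (s/2) * Real.log (S (2/s)))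
      ((1/2) * Real.log (S (2/1 : ℝ)) + (1/2) * ((S2' * -2) / S (2/1 : ℝ))) 1 := by
    have hid : HasDerivAt (fun s : ℝ => s/2) (1/2 : ℝ) 1 := by
      simpa using (hasDerivAt_id (1:ℝ)).div_const 2
    have h : HasDerivAt (fun s : ℝ => (s/2) * Real.log (S (2/s)))
        ((1/2) * Real.log (S (2/1 : ℝ)) + (1/2) * ((S2' * -2) / S (2/1 : ℝ))) 1 := hid.mul hlogS
    convert h using 1
  have hterm2 : HasDerivAt (fun s : ℝ => ((s-1)/2) * Real.log N) ((1/2) * Real.log N) 1 := by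
    have h := (((hasDerivAt_id (1:ℝ)).sub_const 1).div_const 2).mul_const (Real.log N)
    simpa using h
  have hterm3 : HasDerivAt (fun s : ℝ => ((2-s)/2) * Real.log (T (2/(2-s))))
      ((-1/2) * Real.log (T (2/(2-1) : ℝ)) + (1/2) * ((T2' * 2) / T (2/(2-1) : ℝ))) 1 := by
    have hc : HasDerivAt (fun s : ℝ => (2-s)/2) (-1/2 : ℝ) 1 := by
      simpa using ((hasDerivAt_id (1:ℝ)).const_sub 2).div_const 2
    have h : HasDerivAt (fun s : ℝ => ((2-s)/2) * Real.log (T (2/(2-s))))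
        ((-1/2) * Real.log (T (2/(2-1) : ℝ)) + ((2:ℝ)-1)/2 * ((T2' * 2) / T (2/(2-1) : ℝ))) 1 :=
      hc.mul hlogT
    convert h using 1
    norm_num
  have hφd : HasDerivAt φ (-S2' - (1/2) * Real.log N - T2') 1 := by
    have h := (hterm1.sub hterm2).sub hterm3
    have hval : ((1/2) * Real.log (S (2/1 : ℝ)) + (1/2) * ((S2' * -2) / S (2/1 : ℝ)))
        - ((1/2) * Real.log N)
        - ((-1/2) * Real.log (T (2/(2-1) : ℝ)) + (1/2) * ((T2' * 2) / T (2/(2-1) : ℝ)))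
        = -S2' - (1/2) * Real.log N - T2' := by
      rw [hS21, hT21, Real.log_one]
      ring
    rw [hval] at h
    exact h
  have hD := deriv_nonneg_of_left_max hφd hφ1 hφle
  -- final conversion to entropies
  have hee : ∀ i, ⟪e i, ψ⟫_ℂ = ψ i := by
    intro i
    rw [he i, EuclideanSpace.inner_single_left]
    simp
  have hgoal1 : ∑ i, eta (‖⟪e i, ψ⟫_ℂ‖ ^ 2) = -2 * T2' := by
    rw [Finset.mul_sum]
    refine Finset.sum_congr rfl fun i _ => ?_
    rw [hee i]
    show -(u i ^ 2) * Real.log (u i ^ 2) = -2 * (u i ^ (2:ℝ) * Real.log (u i))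
    rw [Real.log_pow, show (2:ℝ) = ((2:ℕ):ℝ) by norm_num, Real.rpow_natCast]
    push_cast
    ring
  have hgoal2 : ∑ j, eta (‖⟪f j, ψ⟫_ℂ‖ ^ 2) = -2 * S2' := by
    rw [Finset.mul_sum]
    refine Finset.sum_congr rfl fun j _ => ?_
    show -(v j ^ 2) * Real.log (v j ^ 2) = -2 * (v j ^ (2:ℝ) * Real.log (v j))
    rw [Real.log_pow, show (2:ℝ) = ((2:ℕ):ℝ) by norm_num, Real.rpow_natCast]
    push_cast
    ring
  rw [ge_iff_le, hgoal1, hgoal2]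
  linarith
end

section
/- Entropic uncertainty principle for quantum partitions: Let ℋ be a complex Hilbert space and let ρ = {ρ_i}_{i∈I} and τ = {τ_j}_{j∈J} be two finite families of bounded operators on ℋ satisfying ∑_{i∈I} ρ_i* ρ_i = Id and ∑_{j∈J} τ_j* τ_j = Id. Then for every unit vector ψ ∈ ℋ, the entropies H(ψ,ρ) = ∑_{i∈I} η(‖ρ_i ψ‖²) and H(ψ,τ) = ∑_{j∈J} η(‖τ_j ψ‖²) satisfy H(ψ,ρ) + H(ψ,τ) ≥ −2·log( max_{i∈I, j∈J} ‖τ_j ρ_i*‖ ), where ‖·‖ is the operator norm. -/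
set_option maxHeartbeats 1000000

open scoped InnerProductSpace
open Complex Finset ContinuousLinearMap Filter

section helpers
open Complex Finset ContinuousLinearMap
open scoped InnerProductSpace

/-- `exp (e * log r) * r ^ f = r ^ (e + f)` for `r ≥ 0`, `f > 0`, `e + f > 0`. -/
lemma key_pow {r : ℝ} (hr : 0 ≤ r) {e f : ℝ} (hf : 0 < f) (hef : 0 < e + f) :
    Real.exp (e * Real.log r) * r ^ f = r ^ (e + f) := by
  rcases hr.eq_or_lt with h | h
  · rw [← h, Real.log_zero, mul_zero, Real.exp_zero, one_mul,
      Real.zero_rpow (ne_of_gt hf), Real.zero_rpow (ne_of_gt hef)]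
  · rw [Real.rpow_def_of_pos h, Real.rpow_def_of_pos h, ← Real.exp_add]
    congr 1; ring

lemma rpow_sq_eq {r : ℝ} (hr : 0 ≤ r) {e : ℝ} (he : 0 < e) :
    (r ^ e) ^ 2 = r ^ (2 * e) := by
  rw [sq, ← Real.rpow_add' hr (by positivity), two_mul]

/-- Cauchy-Schwarz for finite real sums, in sqrt form. -/
lemma sum_mul_le_sqrt_mul_sqrt {J : Type*} [Fintype J] (f g : J → ℝ)
    (hf : ∀ j, 0 ≤ f j) (hg : ∀ j, 0 ≤ g j) :
    ∑ j, f j * g j ≤ Real.sqrt (∑ j, f j ^ 2) * Real.sqrt (∑ j, g j ^ 2) := by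
  have h := Finset.sum_mul_sq_le_sq_mul_sq Finset.univ f g
  have hnn : (0:ℝ) ≤ ∑ j, f j * g j :=
    Finset.sum_nonneg fun j _ => mul_nonneg (hf j) (hg j)
  calc ∑ j, f j * g j = Real.sqrt ((∑ j, f j * g j) ^ 2) := (Real.sqrt_sq hnn).symm
    _ ≤ Real.sqrt ((∑ j, f j ^ 2) * (∑ j, g j ^ 2)) := Real.sqrt_le_sqrt h
    _ = _ := Real.sqrt_mul (Finset.sum_nonneg fun j _ => sq_nonneg _) _

/-- real part of the exponents we use -/
lemma exp_re_aux (e L : ℝ) (z : ℂ) :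
    (((e:ℂ) * (1 + z) - 1) * (L:ℂ)).re = (e * (1 + z.re) - 1) * L := by
  simp [Complex.mul_re, Complex.add_re, Complex.add_im, Complex.ofReal_re, Complex.ofReal_im,
    Complex.sub_re, Complex.sub_im, Complex.one_re, Complex.one_im]

lemma norm_exp_aux (e L : ℝ) (z : ℂ) :
    ‖Complex.exp (((e:ℂ) * (1 + z) - 1) * (L:ℂ))‖ = Real.exp ((e * (1 + z.re) - 1) * L) := by
  rw [Complex.norm_exp, exp_re_aux]

end helpers

section aux
variable {H : Type*} [NormedAddCommGroup H] [InnerProductSpace ℂ H] [CompleteSpace H]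
variable {I J : Type*} [Fintype I] [Fintype J]

variable {H : Type*} [NormedAddCommGroup H] [InnerProductSpace ℂ H] [CompleteSpace H]
variable {I : Type*} [Fintype I]

lemma partition_sum_sq (ρ : I → H →L[ℂ] H)
    (hρ : ∑ i, (ContinuousLinearMap.adjoint (ρ i)).comp (ρ i) = 1) (x : H) :
    ∑ i, ‖ρ i x‖ ^ 2 = ‖x‖ ^ 2 := by
  have h1 : (∑ i, (ContinuousLinearMap.adjoint (ρ i)).comp (ρ i)) x = x := by
    rw [hρ]; rfl
  have h2 : (⟪x, x⟫_ℂ) = ∑ i, ⟪ρ i x, ρ i x⟫_ℂ := by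
    calc ⟪x, x⟫_ℂ = ⟪x, (∑ i, (ContinuousLinearMap.adjoint (ρ i)).comp (ρ i)) x⟫_ℂ := by
          rw [h1]
    _ = ∑ i, ⟪x, ContinuousLinearMap.adjoint (ρ i) (ρ i x)⟫_ℂ := by
          rw [ContinuousLinearMap.sum_apply, inner_sum]; rfl
    _ = ∑ i, ⟪ρ i x, ρ i x⟫_ℂ := by
          simp [ContinuousLinearMap.adjoint_inner_right]
  have h3 : ((‖x‖ : ℂ))^2 = ∑ i, ((‖ρ i x‖ : ℂ))^2 := by
    simpa [inner_self_eq_norm_sq_to_K] using h2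
  have := congrArg Complex.re h3
  simpa [← Complex.ofReal_pow, ← Complex.ofReal_sum] using this.symm

lemma adjoint_sum_norm_le (ρ : I → H →L[ℂ] H)
    (hρ : ∑ i, (ContinuousLinearMap.adjoint (ρ i)).comp (ρ i) = 1) (v : I → H) :
    ‖∑ i, ContinuousLinearMap.adjoint (ρ i) (v i)‖ ≤ Real.sqrt (∑ i, ‖v i‖ ^ 2) := by
  set y := ∑ i, ContinuousLinearMap.adjoint (ρ i) (v i) with hy
  have key : ‖y‖^2 ≤ Real.sqrt (∑ i, ‖v i‖ ^ 2) * ‖y‖ := by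
    have h2 : (⟪y, y⟫_ℂ) = ∑ i, ⟪v i, ρ i y⟫_ℂ := by
      rw [hy, sum_inner]
      exact Finset.sum_congr rfl fun i _ => ContinuousLinearMap.adjoint_inner_left _ _ _
    have h3 : ‖y‖^2 = Complex.re (∑ i, ⟪v i, ρ i y⟫_ℂ) := by
      rw [← h2, inner_self_eq_norm_sq_to_K]
      norm_cast
    rw [h3]
    calc Complex.re (∑ i, ⟪v i, ρ i y⟫_ℂ) ≤ ∑ i, ‖v i‖ * ‖ρ i y‖ := by
          rw [Complex.re_sum]
          refine Finset.sum_le_sum fun i _ => ?_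
          exact (Complex.re_le_norm _).trans (by simpa using norm_inner_le_norm (𝕜 := ℂ) (v i) (ρ i y))
    _ ≤ Real.sqrt (∑ i, ‖v i‖ ^ 2) * Real.sqrt (∑ i, ‖ρ i y‖ ^ 2) := by
          have := Finset.sum_mul_sq_le_sq_mul_sq Finset.univ (fun i => ‖v i‖) (fun i => ‖ρ i y‖)
          have hnn : (0:ℝ) ≤ ∑ i, ‖v i‖ * ‖ρ i y‖ :=
            Finset.sum_nonneg fun i _ => mul_nonneg (norm_nonneg _) (norm_nonneg _)
          calc ∑ i, ‖v i‖ * ‖ρ i y‖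
              = Real.sqrt ((∑ i, ‖v i‖ * ‖ρ i y‖)^2) := (Real.sqrt_sq hnn).symm
            _ ≤ Real.sqrt ((∑ i, ‖v i‖^2) * (∑ i, ‖ρ i y‖^2)) := Real.sqrt_le_sqrt this
            _ = _ := Real.sqrt_mul (Finset.sum_nonneg fun i _ => sq_nonneg _) _
    _ = Real.sqrt (∑ i, ‖v i‖ ^ 2) * ‖y‖ := by
          rw [partition_sum_sq ρ hρ y, Real.sqrt_sq (norm_nonneg _)]
  rcases eq_or_lt_of_le (norm_nonneg y) with h0 | h0
  · rw [← h0]; positivity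
  · have key' : ‖y‖ * ‖y‖ ≤ Real.sqrt (∑ i, ‖v i‖ ^ 2) * ‖y‖ := by
      rw [← sq]; exact key
    exact le_of_mul_le_mul_right (by rwa [mul_comm (‖y‖)] at key') h0


lemma interp_key (ρ : I → H →L[ℂ] H) (τ : J → H →L[ℂ] H)
    (hρ : ∑ i, (ContinuousLinearMap.adjoint (ρ i)).comp (ρ i) = 1)
    (hτ : ∑ j, (ContinuousLinearMap.adjoint (τ j)).comp (τ j) = 1)
    (ψ : H) (hψ : ‖ψ‖ = 1)
    {c : ℝ} (hc : 0 < c)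
    (hcb : ∀ i j, ‖(τ j).comp (ContinuousLinearMap.adjoint (ρ i))‖ ≤ c)
    {s : ℝ} (hs : s ∈ Set.Ioo (1/2 : ℝ) 1) :
    (2*s - 1)/(2*s) * Real.log (∑ j, (‖τ j ψ‖^2 : ℝ) ^ (s/(2*s-1))) ≤
      (1-s)/s * Real.log c + 1/(2*s) * Real.log (∑ i, (‖ρ i ψ‖^2 : ℝ) ^ s) := by
  obtain ⟨hs1, hs2⟩ := hs
  have hs0 : 0 < s := lt_trans (by norm_num) hs1
  have h2s : 0 < 2*s - 1 := by linarith
  set t : ℝ := s/(2*s-1) with ht_def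
  have ht0 : 0 < t := div_pos hs0 h2s
  have ht1 : 1 < t := by
    rw [ht_def, lt_div_iff₀ h2s]; linarith
  set θ : ℝ := (1-s)/s with hθ_def
  have hθ0 : 0 ≤ θ := le_of_lt (div_pos (by linarith) hs0)
  have hθ1 : θ ≤ 1 := by rw [hθ_def, div_le_one hs0]; linarith
  set a : I → ℝ := fun i => ‖ρ i ψ‖ with ha_def
  set b : J → ℝ := fun j => ‖τ j ψ‖ with hb_def
  have ha0 : ∀ i, 0 ≤ a i := fun i => norm_nonneg _
  have hb0 : ∀ j, 0 ≤ b j := fun j => norm_nonneg _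
  have hsum_a : ∑ i, a i ^ 2 = 1 := by rw [partition_sum_sq ρ hρ ψ, hψ]; norm_num
  have hsum_b : ∑ j, b j ^ 2 = 1 := by rw [partition_sum_sq τ hτ ψ, hψ]; norm_num
  set P : ℝ := ∑ i, a i ^ (2*s) with hP_def
  set Q : ℝ := ∑ j, b j ^ (2*t) with hQ_def
  have hP1 : 1 ≤ P := by
    rw [hP_def, ← hsum_a]
    refine Finset.sum_le_sum fun i _ => ?_
    have hai1 : a i ≤ 1 := by
      nlinarith [Finset.single_le_sum (f := fun i => a i ^ 2)
        (fun i _ => sq_nonneg (a i)) (Finset.mem_univ i), sq_nonneg (a i - 1), ha0 i]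
    rcases (ha0 i).eq_or_lt with h | h
    · rw [← h, Real.zero_rpow (by positivity)]; simp
    · calc a i ^ 2 = a i ^ ((2:ℕ):ℝ) := by rw [Real.rpow_natCast]
        _ ≤ a i ^ (2*s) := by
            apply Real.rpow_le_rpow_of_exponent_ge h hai1
            push_cast; linarith
  have hP0 : 0 < P := lt_of_lt_of_le one_pos hP1
  have hQ0 : 0 < Q := by
    have : ∃ j, 0 < b j := by
      by_contra hcon
      push_neg at hcon
      have : ∀ j, b j = 0 := fun j => le_antisymm (hcon j) (hb0 j)
      rw [Finset.sum_eq_zero (fun j _ => by rw [this j]; ring)] at hsum_b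
      norm_num at hsum_b
    obtain ⟨j0, hj0⟩ := this
    have : 0 < b j0 ^ (2*t) := Real.rpow_pos_of_pos hj0 _
    refine lt_of_lt_of_le this ?_
    exact Finset.single_le_sum (f := fun j => b j ^ (2*t))
      (fun j _ => Real.rpow_nonneg (hb0 j) _) (Finset.mem_univ j0)
  -- the analytic family
  set vexp : I → ℂ → ℂ := fun i z => Complex.exp (((s:ℂ) * (1 + z) - 1) * (Real.log (a i) : ℂ))
    with hvexp_def
  set mexp : J → ℂ → ℂ := fun j z => Complex.exp (((t:ℂ) * (1 + z) - 1) * (Real.log (b j) : ℂ))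
    with hmexp_def
  set Φ : ℂ → H := fun z => ∑ i, ContinuousLinearMap.adjoint (ρ i) ((vexp i z) • (ρ i ψ))
    with hΦ_def
  set F : ℂ → ℂ := fun z => ∑ j, mexp j z * (⟪τ j ψ, τ j (Φ z)⟫_ℂ) with hF_def
  -- norms of the exponentials
  have hnv : ∀ i (z : ℂ), ‖vexp i z‖ = Real.exp ((s * (1 + z.re) - 1) * Real.log (a i)) :=
    fun i z => norm_exp_aux s (Real.log (a i)) z
  have hnm : ∀ j (z : ℂ), ‖mexp j z‖ = Real.exp ((t * (1 + z.re) - 1) * Real.log (b j)) :=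
    fun j z => norm_exp_aux t (Real.log (b j)) z
  -- product with base
  have hvb : ∀ i (z : ℂ), 0 ≤ z.re → ‖vexp i z‖ * a i = a i ^ (s * (1 + z.re)) := by
    intro i z hz
    rw [hnv]
    have := key_pow (ha0 i) (e := s * (1 + z.re) - 1) (f := 1) one_pos
      (by nlinarith : (0:ℝ) < (s * (1 + z.re) - 1) + 1)
    rw [Real.rpow_one] at this
    rw [this]; ring_nf
  have hmb : ∀ j (z : ℂ), 0 ≤ z.re → ‖mexp j z‖ * b j = b j ^ (t * (1 + z.re)) := by
    intro j z hz
    rw [hnm]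
    have := key_pow (hb0 j) (e := t * (1 + z.re) - 1) (f := 1) one_pos
      (by nlinarith : (0:ℝ) < (t * (1 + z.re) - 1) + 1)
    rw [Real.rpow_one] at this
    rw [this]; ring_nf
  -- double sum representation
  have hFdouble : ∀ z : ℂ, F z = ∑ j, ∑ i, (mexp j z * vexp i z) *
      (⟪τ j ψ, ((τ j).comp (ContinuousLinearMap.adjoint (ρ i))) (ρ i ψ)⟫_ℂ) := by
    intro z
    refine Finset.sum_congr rfl fun j _ => ?_
    have hτΦ : τ j (Φ z) = ∑ i, vexp i z • (((τ j).comp (ContinuousLinearMap.adjoint (ρ i))) (ρ i ψ)) := by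
      rw [hΦ_def]
      simp only [map_sum, map_smul, ContinuousLinearMap.comp_apply]
    rw [hτΦ, inner_sum, Finset.mul_sum]
    refine Finset.sum_congr rfl fun i _ => ?_
    rw [inner_smul_right]
    ring
  -- differentiability
  have hlinD : ∀ (e L : ℝ), Differentiable ℂ (fun z : ℂ => Complex.exp (((e:ℂ) * (1 + z) - 1) * (L:ℂ))) := by
    intro e L
    apply Differentiable.cexp
    apply Differentiable.mul _ (differentiable_const _)
    exact ((differentiable_const _).mul ((differentiable_const _).add differentiable_id)).sub
      (differentiable_const _)
  have hFdiff : Differentiable ℂ F := by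
    rw [funext hFdouble]
    apply Differentiable.fun_sum; intro j _
    apply Differentiable.fun_sum; intro i _
    exact (((hlinD t _).mul (hlinD s _)).mul (differentiable_const _))
  -- bounded on the strip
  have hFbdd : BddAbove ((norm ∘ F) '' (Complex.HadamardThreeLines.verticalClosedStrip 0 1)) := by
    refine ⟨∑ j, ∑ i, Real.exp ((2*t+1) * |Real.log (b j)|) * Real.exp ((2*s+1) * |Real.log (a i)|) *
      ‖⟪τ j ψ, ((τ j).comp (ContinuousLinearMap.adjoint (ρ i))) (ρ i ψ)⟫_ℂ‖, ?_⟩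
    rintro x ⟨z, hz, rfl⟩
    simp only [Function.comp_apply]
    have hzre : z.re ∈ Set.Icc (0:ℝ) 1 := hz
    rw [hFdouble z]
    refine (norm_sum_le _ _).trans ?_
    refine Finset.sum_le_sum fun j _ => ?_
    refine (norm_sum_le _ _).trans ?_
    refine Finset.sum_le_sum fun i _ => ?_
    rw [norm_mul, norm_mul]
    have hmB : ‖mexp j z‖ ≤ Real.exp ((2*t+1) * |Real.log (b j)|) := by
      rw [hnm]
      apply Real.exp_le_exp.mpr
      calc (t * (1 + z.re) - 1) * Real.log (b j) ≤ |(t * (1 + z.re) - 1) * Real.log (b j)| :=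
            le_abs_self _
        _ = |t * (1 + z.re) - 1| * |Real.log (b j)| := abs_mul _ _
        _ ≤ (2*t+1) * |Real.log (b j)| := by
            apply mul_le_mul_of_nonneg_right _ (abs_nonneg _)
            rw [abs_le]
            constructor <;> nlinarith [hzre.1, hzre.2, ht0]
    have hvB : ‖vexp i z‖ ≤ Real.exp ((2*s+1) * |Real.log (a i)|) := by
      rw [hnv]
      apply Real.exp_le_exp.mpr
      calc (s * (1 + z.re) - 1) * Real.log (a i) ≤ |(s * (1 + z.re) - 1) * Real.log (a i)| :=
            le_abs_self _
        _ = |s * (1 + z.re) - 1| * |Real.log (a i)| := abs_mul _ _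
        _ ≤ (2*s+1) * |Real.log (a i)| := by
            apply mul_le_mul_of_nonneg_right _ (abs_nonneg _)
            rw [abs_le]
            constructor <;> nlinarith [hzre.1, hzre.2, hs0]
    apply mul_le_mul_of_nonneg_right _ (norm_nonneg _)
    exact mul_le_mul hmB hvB (norm_nonneg _) (le_of_lt (Real.exp_pos _))
  -- bound on Re z = 0
  have hB0 : ∀ z ∈ Complex.re ⁻¹' {(0:ℝ)}, ‖F z‖ ≤ Real.sqrt Q * Real.sqrt P := by
    intro z hz
    have hzre : z.re = 0 := hz
    have hΦle : ‖Φ z‖ ≤ Real.sqrt P := by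
      rw [hΦ_def]
      refine (adjoint_sum_norm_le ρ hρ _).trans ?_
      apply Real.sqrt_le_sqrt
      apply le_of_eq
      refine Finset.sum_congr rfl fun i _ => ?_
      rw [norm_smul]
      have h1 := hvb i z hzre.ge
      rw [hzre, (by ring : s * (1 + (0:ℝ)) = s)] at h1
      rw [h1, rpow_sq_eq (ha0 i) hs0]
    calc ‖F z‖ ≤ ∑ j, ‖mexp j z * (⟪τ j ψ, τ j (Φ z)⟫_ℂ)‖ := norm_sum_le _ _
      _ ≤ ∑ j, (b j ^ t) * ‖τ j (Φ z)‖ := by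
          refine Finset.sum_le_sum fun j _ => ?_
          rw [norm_mul]
          have hin : ‖(⟪τ j ψ, τ j (Φ z)⟫_ℂ)‖ ≤ b j * ‖τ j (Φ z)‖ :=
            norm_inner_le_norm _ _
          calc ‖mexp j z‖ * ‖(⟪τ j ψ, τ j (Φ z)⟫_ℂ)‖ ≤ ‖mexp j z‖ * (b j * ‖τ j (Φ z)‖) :=
                mul_le_mul_of_nonneg_left hin (norm_nonneg _)
            _ = (‖mexp j z‖ * b j) * ‖τ j (Φ z)‖ := by ring
            _ = (b j ^ t) * ‖τ j (Φ z)‖ := by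
                have h1 := hmb j z hzre.ge
                rw [hzre, (by ring : t * (1 + (0:ℝ)) = t)] at h1
                rw [h1]
      _ ≤ Real.sqrt (∑ j, (b j ^ t) ^ 2) * Real.sqrt (∑ j, ‖τ j (Φ z)‖ ^ 2) :=
          sum_mul_le_sqrt_mul_sqrt _ _ (fun j => Real.rpow_nonneg (hb0 j) _)
            (fun j => norm_nonneg _)
      _ = Real.sqrt Q * ‖Φ z‖ := by
          rw [partition_sum_sq τ hτ (Φ z), Real.sqrt_sq (norm_nonneg _)]
          congr 1
          rw [hQ_def]
          exact congrArg Real.sqrt (Finset.sum_congr rfl fun j _ => rpow_sq_eq (hb0 j) ht0)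
      _ ≤ Real.sqrt Q * Real.sqrt P :=
          mul_le_mul_of_nonneg_left hΦle (Real.sqrt_nonneg _)
  -- bound on Re z = 1
  have hB1 : ∀ z ∈ Complex.re ⁻¹' {(1:ℝ)}, ‖F z‖ ≤ c * (Q * P) := by
    intro z hz
    have hzre : z.re = 1 := hz
    rw [hFdouble z]
    calc ‖∑ j, ∑ i, (mexp j z * vexp i z) *
        (⟪τ j ψ, ((τ j).comp (ContinuousLinearMap.adjoint (ρ i))) (ρ i ψ)⟫_ℂ)‖
        ≤ ∑ j, ∑ i, (b j ^ (2*t)) * ((a i ^ (2*s)) * c) := by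
          refine (norm_sum_le _ _).trans (Finset.sum_le_sum fun j _ => ?_)
          refine (norm_sum_le _ _).trans (Finset.sum_le_sum fun i _ => ?_)
          rw [norm_mul, norm_mul]
          have hC : ‖(⟪τ j ψ, ((τ j).comp (ContinuousLinearMap.adjoint (ρ i))) (ρ i ψ)⟫_ℂ)‖ ≤
              b j * (c * a i) := by
            refine (norm_inner_le_norm _ _).trans ?_
            apply mul_le_mul_of_nonneg_left _ (hb0 j)
            refine (ContinuousLinearMap.le_opNorm _ _).trans ?_
            exact mul_le_mul_of_nonneg_right (hcb i j) (ha0 i)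
          have hmb2 : ‖mexp j z‖ * b j = b j ^ (2*t) := by
            have h1 := hmb j z (by rw [hzre]; norm_num)
            rw [hzre, (by ring : t * (1 + (1:ℝ)) = 2*t)] at h1
            exact h1
          have hvb2 : ‖vexp i z‖ * a i = a i ^ (2*s) := by
            have h1 := hvb i z (by rw [hzre]; norm_num)
            rw [hzre, (by ring : s * (1 + (1:ℝ)) = 2*s)] at h1
            exact h1
          calc ‖mexp j z‖ * ‖vexp i z‖ *
              ‖(⟪τ j ψ, ((τ j).comp (ContinuousLinearMap.adjoint (ρ i))) (ρ i ψ)⟫_ℂ)‖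
              ≤ ‖mexp j z‖ * ‖vexp i z‖ * (b j * (c * a i)) := by
                apply mul_le_mul_of_nonneg_left hC
                positivity
            _ = (‖mexp j z‖ * b j) * ((‖vexp i z‖ * a i) * c) := by ring
            _ = (b j ^ (2*t)) * ((a i ^ (2*s)) * c) := by rw [hmb2, hvb2]
      _ = c * (Q * P) := by
          calc ∑ j, ∑ i, (b j ^ (2*t)) * ((a i ^ (2*s)) * c)
              = ∑ j, (b j ^ (2*t)) * ((∑ i, a i ^ (2*s)) * c) := by
                refine Finset.sum_congr rfl fun j _ => ?_
                rw [← Finset.mul_sum, ← Finset.sum_mul]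
            _ = (∑ j, b j ^ (2*t)) * ((∑ i, a i ^ (2*s)) * c) := by rw [← Finset.sum_mul]
            _ = c * (Q * P) := by rw [← hQ_def, ← hP_def]; ring
  -- value at θ
  have hFθ : F (θ:ℂ) = (Q:ℂ) := by
    have hsne : (s:ℂ) ≠ 0 := Complex.ofReal_ne_zero.mpr (ne_of_gt hs0)
    have hsθ : ((s:ℂ) * (1 + (θ:ℂ)) - 1) = 0 := by
      rw [hθ_def]
      push_cast
      field_simp
      ring
    have hvθ : ∀ i, vexp i (θ:ℂ) = 1 := by
      intro i
      rw [hvexp_def]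
      simp only [hsθ, zero_mul, Complex.exp_zero]
    have hΦθ : Φ (θ:ℂ) = ψ := by
      rw [hΦ_def]
      simp only [hvθ, one_smul]
      have h1 : (∑ i, (ContinuousLinearMap.adjoint (ρ i)).comp (ρ i)) ψ = ψ := by
        rw [hρ]; rfl
      rw [ContinuousLinearMap.sum_apply] at h1
      simp only [ContinuousLinearMap.comp_apply] at h1
      exact h1
    have het : t * (1 + θ) - 1 + 2 = 2 * t := by
      rw [hθ_def, ht_def]
      have h2s' : 2*s - 1 ≠ 0 := h2s.ne'
      rw [div_mul_eq_mul_div, eq_comm, mul_div_assoc', div_sub_one h2s', div_add' _ _ _ h2s', div_left_inj' h2s']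
      field_simp
      ring
    have hreal : ∀ j, Real.exp ((t * (1 + θ) - 1) * Real.log (b j)) * (b j) ^ 2 = b j ^ (2*t) := by
      intro j
      have h2 : ((b j):ℝ) ^ (2:ℕ) = (b j) ^ ((2:ℕ):ℝ) := (Real.rpow_natCast _ _).symm
      rw [h2]
      push_cast
      rw [key_pow (hb0 j) (by norm_num : (0:ℝ) < 2) (by rw [het]; positivity), het]
    calc F (θ:ℂ)
        = ∑ j, ((Real.exp ((t * (1 + θ) - 1) * Real.log (b j)) * (b j) ^ 2 : ℝ) : ℂ) := by
          rw [hF_def]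
          refine Finset.sum_congr rfl fun j _ => ?_
          rw [hΦθ]
          have hin : (⟪τ j ψ, τ j ψ⟫_ℂ) = ((b j : ℂ)) ^ 2 := inner_self_eq_norm_sq_to_K _
          have hE : ((t:ℂ) * (1 + (θ:ℂ)) - 1) * ((Real.log (b j) : ℝ) : ℂ) =
              (((t * (1 + θ) - 1) * Real.log (b j) : ℝ) : ℂ) := by push_cast; ring
          rw [hmexp_def]
          simp only [hE, ← Complex.ofReal_exp, hin]
          push_cast
          ring
      _ = (Q:ℂ) := by
          rw [hQ_def]
          norm_cast
          exact Finset.sum_congr rfl fun j _ => hreal j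
  -- three lines
  have hz : (θ:ℂ) ∈ Complex.HadamardThreeLines.verticalClosedStrip 0 1 := by
    simp only [Complex.HadamardThreeLines.verticalClosedStrip, Set.mem_preimage,
      Complex.ofReal_re, Set.mem_Icc]
    exact ⟨hθ0, hθ1⟩
  have h3 := Complex.HadamardThreeLines.norm_le_interp_of_mem_verticalClosedStrip' (f := F) (by norm_num : (0:ℝ) < 1) hz
    (hFdiff.diffContOnCl) hFbdd hB0 hB1
  rw [hFθ, Complex.ofReal_re] at h3
  have hQabs : ‖(Q:ℂ)‖ = Q := by
    rw [Complex.norm_real, Real.norm_of_nonneg (le_of_lt hQ0)]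
  rw [hQabs] at h3
  -- take logs
  have hRHS0 : 0 < Real.sqrt Q * Real.sqrt P := by positivity
  have hRHS1 : 0 < c * (Q * P) := by positivity
  have hlog := Real.log_le_log hQ0 h3
  rw [Real.log_mul (by positivity) (by positivity),
    Real.log_rpow hRHS0, Real.log_rpow hRHS1,
    Real.log_mul (ne_of_gt (Real.sqrt_pos.mpr hQ0)) (ne_of_gt (Real.sqrt_pos.mpr hP0)),
    Real.log_sqrt (le_of_lt hQ0), Real.log_sqrt (le_of_lt hP0),
    Real.log_mul (ne_of_gt hc) (ne_of_gt (by positivity : (0:ℝ) < Q * P)),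
    Real.log_mul (ne_of_gt hQ0) (ne_of_gt hP0)] at hlog
  -- convert the goal sums to P and Q
  have hgoalQ : (∑ j, (‖τ j ψ‖^2 : ℝ) ^ (s/(2*s-1))) = Q := by
    rw [hQ_def]
    refine Finset.sum_congr rfl fun j _ => ?_
    rw [← Real.rpow_natCast (b j) 2, ← Real.rpow_mul (hb0 j)]
    norm_num
    rfl
  have hgoalP : (∑ i, (‖ρ i ψ‖^2 : ℝ) ^ s) = P := by
    rw [hP_def]
    refine Finset.sum_congr rfl fun i _ => ?_
    rw [← Real.rpow_natCast (a i) 2, ← Real.rpow_mul (ha0 i)]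
    norm_num
  rw [hgoalQ, hgoalP]
  -- final linear arithmetic
  have e1 : (2*s-1)/(2*s) = (1-θ)/2 := by rw [hθ_def]; field_simp; ring
  have e3 : 1/(2*s) = (1+θ)/2 := by rw [hθ_def]; field_simp; ring
  rw [e1, e3]
  nlinarith [hlog]

end aux

open Finset Filter
lemma hasDerivAt_log_sum_rpow {I : Type*} [Fintype I] (p : I → ℝ) (hp : ∀ i, 0 ≤ p i)
    (hsum : ∑ i, p i = 1) :
    HasDerivAt (fun s : ℝ => Real.log (∑ i, p i ^ s)) (∑ i, p i * Real.log (p i)) 1 := by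
  have hterm : ∀ i : I, HasDerivAt (fun s : ℝ => p i ^ s) (p i * Real.log (p i)) 1 := by
    intro i
    rcases eq_or_lt_of_le (hp i) with h | h
    · have hev : (fun _ : ℝ => (0:ℝ)) =ᶠ[nhds (1:ℝ)] (fun s : ℝ => p i ^ s) := by
        filter_upwards [eventually_gt_nhds (by norm_num : (0:ℝ) < 1)] with s hs
        rw [← h, Real.zero_rpow (ne_of_gt hs)]
      have : HasDerivAt (fun _ : ℝ => (0:ℝ)) (p i * Real.log (p i)) 1 := by
        rw [← h]; simpa using hasDerivAt_const (1:ℝ) (0:ℝ)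
      exact this.congr_of_eventuallyEq hev.symm
    · have h1 : HasDerivAt (fun s : ℝ => Real.log (p i) * s) (Real.log (p i)) 1 := by
        simpa using (hasDerivAt_id (1:ℝ)).const_mul (Real.log (p i))
      have h2 := h1.exp
      have hfe : (fun s : ℝ => Real.exp (Real.log (p i) * s)) = fun s : ℝ => p i ^ s := by
        funext s; rw [Real.rpow_def_of_pos h]
      rw [hfe] at h2
      simpa [Real.exp_log h, mul_comm] using h2
  have hsumD : HasDerivAt (fun s : ℝ => ∑ i, p i ^ s) (∑ i, p i * Real.log (p i)) 1 :=
    HasDerivAt.fun_sum fun i _ => hterm i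
  have hne : (∑ i, p i ^ (1:ℝ)) ≠ 0 := by
    simp only [Real.rpow_one]; rw [hsum]; norm_num
  have := hsumD.log hne
  simpa [Real.rpow_one, hsum] using this


/-- **Entropic uncertainty principle for quantum partitions of unity.**
If `{ρ_i}` and `{τ_j}` are finite families of bounded operators on a complex
Hilbert space with `∑ ρ_i* ρ_i = Id` and `∑ τ_j* τ_j = Id`, then for every unit
vector `ψ`,
`H(ψ,ρ) + H(ψ,τ) ≥ -2 log (max_{i,j} ‖τ_j ρ_i*‖)`. -/
theorem entropic_uncertainty_quantum_partition
    {H : Type*} [NormedAddCommGroup H] [InnerProductSpace ℂ H] [CompleteSpace H]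
    {I J : Type*} [Fintype I] [Fintype J] [Nonempty I] [Nonempty J]
    (ρ : I → H →L[ℂ] H) (τ : J → H →L[ℂ] H)
    (hρ : ∑ i, (ContinuousLinearMap.adjoint (ρ i)).comp (ρ i) = 1)
    (hτ : ∑ j, (ContinuousLinearMap.adjoint (τ j)).comp (τ j) = 1)
    (ψ : H) (hψ : ‖ψ‖ = 1) :
    (∑ i, eta (‖ρ i ψ‖ ^ 2)) + (∑ j, eta (‖τ j ψ‖ ^ 2)) ≥
      -2 * Real.log (⨆ p : I × J, ‖(τ p.2).comp (ContinuousLinearMap.adjoint (ρ p.1))‖) := by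
  set c : ℝ := ⨆ p : I × J, ‖(τ p.2).comp (ContinuousLinearMap.adjoint (ρ p.1))‖ with hc_def
  have hcb : ∀ i j, ‖(τ j).comp (ContinuousLinearMap.adjoint (ρ i))‖ ≤ c := by
    intro i j
    have := le_ciSup (f := fun p : I × J => ‖(τ p.2).comp (ContinuousLinearMap.adjoint (ρ p.1))‖)
      (Finite.bddAbove_range _) (⟨i, j⟩ : I × J)
    simpa using this
  set pf : I → ℝ := fun i => ‖ρ i ψ‖ ^ 2 with hpf_def
  set qf : J → ℝ := fun j => ‖τ j ψ‖ ^ 2 with hqf_def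
  have hpf0 : ∀ i, 0 ≤ pf i := fun i => sq_nonneg _
  have hqf0 : ∀ j, 0 ≤ qf j := fun j => sq_nonneg _
  have hsum_p : ∑ i, pf i = 1 := by
    rw [hpf_def]; rw [partition_sum_sq ρ hρ ψ, hψ]; norm_num
  have hsum_q : ∑ j, qf j = 1 := by
    rw [hqf_def]; rw [partition_sum_sq τ hτ ψ, hψ]; norm_num
  -- c is positive
  have hc0 : 0 < c := by
    rcases lt_or_ge 0 c with h | h
    · exact h
    exfalso
    have hall : ∀ i j, (τ j).comp (ContinuousLinearMap.adjoint (ρ i)) = 0 := fun i j =>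
      norm_le_zero_iff.mp ((hcb i j).trans h)
    obtain ⟨j0, hj0⟩ : ∃ j, qf j ≠ 0 := by
      by_contra hcon
      push_neg at hcon
      rw [Finset.sum_eq_zero (fun j _ => hcon j)] at hsum_q
      norm_num at hsum_q
    have hψeq : ψ = ∑ i, ContinuousLinearMap.adjoint (ρ i) (ρ i ψ) := by
      have h1 : (∑ i, (ContinuousLinearMap.adjoint (ρ i)).comp (ρ i)) ψ = ψ := by
        rw [hρ]; rfl
      rw [ContinuousLinearMap.sum_apply] at h1
      simp only [ContinuousLinearMap.comp_apply] at h1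
      exact h1.symm
    have : τ j0 ψ = 0 := by
      conv_lhs => rw [hψeq]
      rw [map_sum]
      refine Finset.sum_eq_zero fun i _ => ?_
      have := hall i j0
      calc τ j0 (ContinuousLinearMap.adjoint (ρ i) (ρ i ψ))
          = ((τ j0).comp (ContinuousLinearMap.adjoint (ρ i))) (ρ i ψ) := rfl
        _ = 0 := by rw [this]; rfl
    apply hj0
    rw [hqf_def]
    simp [this]
  -- derivative facts
  have hApre := hasDerivAt_log_sum_rpow pf hpf0 hsum_p
  have hBpre := hasDerivAt_log_sum_rpow qf hqf0 hsum_q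
  set Hp : ℝ := ∑ i, eta (pf i) with hHp_def
  set Hq : ℝ := ∑ j, eta (qf j) with hHq_def
  have hetap : ∑ i, pf i * Real.log (pf i) = -Hp := by
    rw [hHp_def, ← Finset.sum_neg_distrib]
    refine Finset.sum_congr rfl fun i _ => ?_
    simp [_root_.eta]
  have hetaq : ∑ j, qf j * Real.log (qf j) = -Hq := by
    rw [hHq_def, ← Finset.sum_neg_distrib]
    refine Finset.sum_congr rfl fun j _ => ?_
    simp [_root_.eta]
  rw [hetap] at hApre
  rw [hetaq] at hBpre
  set A : ℝ → ℝ := fun s => Real.log (∑ i, pf i ^ s) with hA_def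
  set B : ℝ → ℝ := fun r => Real.log (∑ j, qf j ^ r) with hB_def
  set tfun : ℝ → ℝ := fun s => s / (2*s - 1) with htfun_def
  -- the key inequality family
  have hineq : ∀ s ∈ Set.Ioo (1/2 : ℝ) 1,
      (2*s - 1)/(2*s) * B (tfun s) ≤ (1-s)/s * Real.log c + 1/(2*s) * A s := by
    intro s hs
    exact interp_key ρ τ hρ hτ ψ hψ hc0 hcb hs
  -- slope convergence for A
  have hIoosub : Set.Iio (1:ℝ) ⊆ {(1:ℝ)}ᶜ := fun x hx => ne_of_lt hx
  have hIoisub : Set.Ioi (1:ℝ) ⊆ {(1:ℝ)}ᶜ := fun x hx => ne_of_gt hx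
  have hA' : Filter.Tendsto (slope A 1) (nhdsWithin 1 (Set.Iio 1)) (nhds (-Hp)) :=
    (hasDerivAt_iff_tendsto_slope.mp hApre).mono_left (nhdsWithin_mono 1 hIoosub)
  -- tfun tends to 1 from above
  have hIoomem : Set.Ioo (1/2 : ℝ) 1 ∈ nhdsWithin (1:ℝ) (Set.Iio 1) :=
    Ioo_mem_nhdsLT_of_mem (by norm_num : (1:ℝ) ∈ Set.Ioc (1/2 : ℝ) 1)
  have htt : Filter.Tendsto tfun (nhdsWithin 1 (Set.Iio 1)) (nhdsWithin 1 (Set.Ioi 1)) := by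
    rw [tendsto_nhdsWithin_iff]
    constructor
    · have hcont : ContinuousAt tfun 1 := by
        apply ContinuousAt.div continuousAt_id (by fun_prop)
        norm_num
      have : tfun 1 = 1 := by rw [htfun_def]; norm_num
      have := hcont.tendsto
      rw [‹tfun 1 = 1›] at this
      exact this.mono_left nhdsWithin_le_nhds
    · filter_upwards [hIoomem] with s hs
      have h2s : 0 < 2*s - 1 := by have := hs.1; linarith
      rw [htfun_def, Set.mem_Ioi, lt_div_iff₀ h2s]
      have := hs.2; linarith
  have hB' : Filter.Tendsto (fun s => slope B 1 (tfun s)) (nhdsWithin 1 (Set.Iio 1))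
      (nhds (-Hq)) :=
    ((hasDerivAt_iff_tendsto_slope.mp hBpre).mono_left (nhdsWithin_mono 1 hIoisub)).comp
      htt
  have hA1 : A 1 = 0 := by
    rw [hA_def]
    simp only [Real.rpow_one]
    rw [hsum_p, Real.log_one]
  have hB1 : B 1 = 0 := by
    rw [hB_def]
    simp only [Real.rpow_one]
    rw [hsum_q, Real.log_one]
  -- limit of the combined expression
  set G : ℝ → ℝ := fun s => (1/(2*s) * A s - (2*s-1)/(2*s) * B (tfun s)) / (1 - s) with hG_def
  have hGlim : Filter.Tendsto G (nhdsWithin 1 (Set.Iio 1)) (nhds ((Hp + Hq)/2)) := by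
    have hE : Filter.Tendsto (fun s => 1/(2*s) * (-(slope A 1 s)) -
        (2*s-1)/(2*s) * (slope B 1 (tfun s) * (1/(2*s-1))))
        (nhdsWithin 1 (Set.Iio 1)) (nhds (1/2 * (-(-Hp)) - 1/2 * (-Hq * 1))) := by
      have c1 : Filter.Tendsto (fun s : ℝ => 1/(2*s)) (nhdsWithin 1 (Set.Iio 1))
          (nhds (1/2)) := by
        apply Filter.Tendsto.mono_left _ nhdsWithin_le_nhds
        have : ContinuousAt (fun s : ℝ => 1/(2*s)) 1 := by
          apply ContinuousAt.div continuousAt_const (by fun_prop)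
          norm_num
        simpa using this.tendsto
      have c2 : Filter.Tendsto (fun s : ℝ => (2*s-1)/(2*s)) (nhdsWithin 1 (Set.Iio 1))
          (nhds (1/2)) := by
        apply Filter.Tendsto.mono_left _ nhdsWithin_le_nhds
        have : ContinuousAt (fun s : ℝ => (2*s-1)/(2*s)) 1 := by
          apply ContinuousAt.div (by fun_prop) (by fun_prop)
          norm_num
        have ht := this.tendsto
        norm_num at ht ⊢
        exact ht
      have c3 : Filter.Tendsto (fun s : ℝ => 1/(2*s-1)) (nhdsWithin 1 (Set.Iio 1))
          (nhds 1) := by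
        apply Filter.Tendsto.mono_left _ nhdsWithin_le_nhds
        have : ContinuousAt (fun s : ℝ => 1/(2*s-1)) 1 := by
          apply ContinuousAt.div continuousAt_const (by fun_prop)
          norm_num
        have ht := this.tendsto
        norm_num at ht ⊢
        exact ht
      exact (c1.mul hA'.neg).sub (c2.mul (hB'.mul c3))
    have heq : ∀ᶠ s in nhdsWithin (1:ℝ) (Set.Iio 1), 1/(2*s) * (-(slope A 1 s)) -
        (2*s-1)/(2*s) * (slope B 1 (tfun s) * (1/(2*s-1))) = G s := by
      filter_upwards [hIoomem] with s hs
      have hs1 : s < 1 := hs.2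
      have h2s : 0 < 2*s - 1 := by have := hs.1; linarith
      have h1s : (0:ℝ) < 1 - s := by linarith
      have h2s' : (2*s-1) ≠ 0 := ne_of_gt h2s
      have h1s' : (1-s) ≠ 0 := ne_of_gt h1s
      have hs0 : 0 < s := by linarith [hs.1]
      have hs0' : s ≠ 0 := ne_of_gt hs0
      have hsA : -(slope A 1 s) = A s / (1 - s) := by
        rw [slope_def_field, hA1, sub_zero, ← neg_div,
          div_eq_div_iff (by linarith : s - 1 ≠ 0) (ne_of_gt h1s)]
        ring
      have htms : tfun s - 1 = (1-s)/(2*s-1) := by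
        rw [htfun_def]
        rw [div_sub_one h2s']
        ring
      have hsB : slope B 1 (tfun s) * (1/(2*s-1)) = B (tfun s) / (1 - s) := by
        rw [slope_def_field, hB1, sub_zero, htms]
        generalize B (tfun s) = xB
        rw [div_div_eq_mul_div]
        field_simp
      show 1/(2*s) * (-(slope A 1 s)) - (2*s-1)/(2*s) * (slope B 1 (tfun s) * (1/(2*s-1))) =
        (1/(2*s) * A s - (2*s-1)/(2*s) * B (tfun s)) / (1 - s)
      rw [hsA, hsB]
      generalize A s = xA
      generalize B (tfun s) = xB
      field_simp
    have h1 : (1:ℝ)/2 * (-(-Hp)) - 1/2 * (-Hq * 1) = (Hp + Hq)/2 := by ring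
    rw [h1] at hE
    exact Filter.Tendsto.congr' heq hE
  -- lower bound family for G
  have hGlb : ∀ᶠ s in nhdsWithin (1:ℝ) (Set.Iio 1), -Real.log c / s ≤ G s := by
    filter_upwards [hIoomem] with s hs
    have hs0 : 0 < s := lt_trans (by norm_num) hs.1
    have h1s : (0:ℝ) < 1 - s := by linarith [hs.2]
    have hkey := hineq s hs
    rw [hG_def, le_div_iff₀ h1s]
    have hid : -Real.log c / s * (1 - s) = -((1-s)/s * Real.log c) := by
      ring
    rw [hid]
    linarith
  -- pass to the limit
  have hfinal : -Real.log c ≤ (Hp + Hq)/2 := by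
    have hclim : Filter.Tendsto (fun s : ℝ => -Real.log c / s) (nhdsWithin 1 (Set.Iio 1))
        (nhds (-Real.log c)) := by
      apply Filter.Tendsto.mono_left _ nhdsWithin_le_nhds
      have : ContinuousAt (fun s : ℝ => -Real.log c / s) 1 := by
        apply ContinuousAt.div continuousAt_const continuousAt_id
        norm_num
      simpa using this.tendsto
    exact le_of_tendsto_of_tendsto hclim hGlim hGlb
  have : Hp + Hq ≥ -2 * Real.log c := by linarith
  exact this
end

section
/- Entropic uncertainty principle for weighted quantum partitions: Let ℋ be a complex Hilbert space, let ρ = {ρ_i}_{i∈I} and τ = {τ_j}_{j∈J} be two finite families of bounded operators on ℋ satisfying ∑_{i∈I} ρ_i* ρ_i = Id and ∑_{j∈J} τ_j* τ_j = Id, and let v = {v_i > 0}_{i∈I}, w = {w_j > 0}_{j∈J} be families of positive weights. Then for every unit vector ψ ∈ ℋ, the pressures p(ψ,ρ,v) = ∑_{i∈I} η(‖ρ_i ψ‖²) − 2 ∑_{i∈I} ‖ρ_i ψ‖² log v_i and p(ψ,τ,w) = ∑_{j∈J} η(‖τ_j ψ‖²) − 2 ∑_{j∈J} ‖τ_j ψ‖²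 log w_j satisfy p(ψ,ρ,v) + p(ψ,τ,w) ≥ −2·log( max_{i∈I, j∈J} v_i w_j ‖τ_j ρ_i*‖ ). -/
open scoped InnerProductSpace

noncomputable def Gf {ι : Type*} [Fintype ι] (r u : ι → ℝ) (t : ℝ) : ℝ :=
  ∑ i, if r i = 0 then 0 else Real.exp ((Real.log (r i) + 2 * t * Real.log (u i)) / (1 - t))

lemma Gf_zero {ι : Type*} [Fintype ι] (r u : ι → ℝ) (hr : ∀ i, 0 ≤ r i) :
    Gf r u 0 = ∑ i, r i := by
  refine Finset.sum_congr rfl fun i _ => ?_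
  by_cases h : r i = 0
  · simp [h]
  · have : 0 < r i := lt_of_le_of_ne (hr i) (Ne.symm h)
    simp [h, Real.exp_log this]

lemma Gf_pos {ι : Type*} [Fintype ι] (r u : ι → ℝ) (t : ℝ) (h : ∃ i, r i ≠ 0) :
    0 < Gf r u t := by
  obtain ⟨i0, hi0⟩ := h
  refine Finset.sum_pos' (fun i _ => ?_) ⟨i0, Finset.mem_univ i0, ?_⟩
  · by_cases h : r i = 0 <;> simp [h, (Real.exp_pos _).le]
  · simp [hi0, Real.exp_pos]

lemma Gf_hasDerivAt {ι : Type*} [Fintype ι] (r u : ι → ℝ) (hr : ∀ i, 0 ≤ r i) :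
    HasDerivAt (Gf r u) (∑ i, (r i * Real.log (r i) + 2 * r i * Real.log (u i))) 0 := by
  have : ∀ i ∈ Finset.univ (α := ι), HasDerivAt
      (fun t => if r i = 0 then (0:ℝ) else Real.exp ((Real.log (r i) + 2 * t * Real.log (u i)) / (1 - t)))
      (r i * Real.log (r i) + 2 * r i * Real.log (u i)) 0 := by
    intro i _
    by_cases h : r i = 0
    · simp only [h, if_true]
      simpa [h] using (hasDerivAt_const (0:ℝ) (0:ℝ))
    · have hpos : 0 < r i := lt_of_le_of_ne (hr i) (Ne.symm h)
      simp only [h, if_false]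
      have hg : HasDerivAt (fun t : ℝ => (Real.log (r i) + 2 * t * Real.log (u i)) / (1 - t))
          (2 * Real.log (u i) + Real.log (r i)) 0 := by
        have h1 : HasDerivAt (fun t : ℝ => Real.log (r i) + 2 * t * Real.log (u i))
            (2 * Real.log (u i)) 0 := by
          simpa using ((hasDerivAt_id (0:ℝ)).const_mul 2 |>.mul_const (Real.log (u i))).const_add (Real.log (r i))
        have h2 : HasDerivAt (fun t : ℝ => 1 - t) (-1) 0 := by
          simpa using (hasDerivAt_id (0:ℝ)).const_sub 1
        exact (h1.div h2 (by norm_num)).congr_deriv (by ring)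
      have := hg.exp
      convert this using 1
      rw [show (Real.log (r i) + 2 * 0 * Real.log (u i)) / (1 - 0) = Real.log (r i) by norm_num,
        Real.exp_log hpos]
      ring
  exact HasDerivAt.fun_sum this

private lemma expid1 {θ : ℝ} (h : (1:ℝ) + θ ≠ 0) (x y : ℝ) :
    2 * ((1 / (2 * (1 + θ)) - 1 / 2) * x - θ / (1 + θ) * y) + x = (x + 2 * (-θ) * y) / (1 - -θ) := by
  have h' : (1:ℝ) - -θ ≠ 0 := by intro hc; apply h; linarith
  field_simp
  ring

private lemma expid2 {θ : ℝ} (h : (1:ℝ) + θ ≠ 0) (x y : ℝ) :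
    (1 / (2 * (1 + θ)) * x + 1 / (1 + θ) * y) + ((1 / (2 * (1 + θ)) - 1 / 2) * x - θ / (1 + θ) * y)
      + 1 / 2 * x - y = (x + 2 * (-θ) * y) / (1 - -θ) := by
  have h' : (1:ℝ) - -θ ≠ 0 := by intro hc; apply h; linarith
  field_simp
  ring

private lemma expid3 {θ : ℝ} (h : (1:ℝ) + θ ≠ 0) (x y : ℝ) :
    (1 / (2 * (1 + θ)) * x + 1 / (1 + θ) * y) * θ
      + ((1 / (2 * (1 + θ)) - 1 / 2) * x - θ / (1 + θ) * y) = 0 := by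
  field_simp
  ring

private lemma expid4 {θ : ℝ} (h : (1:ℝ) - θ ≠ 0) (x y : ℝ) :
    2 * ((1 / (2 * (1 - θ)) - 1 / 2) * x + θ / (1 - θ) * y) + x = (x + 2 * θ * y) / (1 - θ) := by
  field_simp
  ring

private lemma expid5 {θ : ℝ} (h : (1:ℝ) - θ ≠ 0) (x y : ℝ) :
    (1 / (2 * (1 - θ)) * x + (θ / (1 - θ) + 1) * y) + ((1 / (2 * (1 - θ)) - 1 / 2) * x + θ / (1 - θ) * y)
      + 1 / 2 * x - y = (x + 2 * θ * y) / (1 - θ) := by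
  field_simp
  ring

private lemma expid6 {θ : ℝ} (h : (1:ℝ) - θ ≠ 0) (x y : ℝ) :
    (1 / (2 * (1 - θ)) * x + (θ / (1 - θ) + 1) * y) * θ
      + ((1 / (2 * (1 - θ)) - 1 / 2) * x + θ / (1 - θ) * y) + x = (x + 2 * θ * y) / (1 - θ) := by
  field_simp
  ring

private lemma boundary_one_calc {c va wa nrm X e1 e2 lp lq EA EQ : ℝ}
    (hva : 0 < va) (hwa : 0 < wa)
    (hX : X ≤ Real.exp (1 / 2 * lq) * (nrm * Real.exp (1 / 2 * lp)))
    (hc : va * wa * nrm ≤ c)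
    (hEA : e1 + 1 / 2 * lp - Real.log va = EA) (hEQ : e2 + 1 / 2 * lq - Real.log wa = EQ) :
    Real.exp e1 * (Real.exp e2 * X) ≤ c * (Real.exp EA * Real.exp EQ) := by
  have h1 : Real.exp e1 * (Real.exp e2 * X)
      ≤ Real.exp e1 * (Real.exp e2 * (Real.exp (1 / 2 * lq) * (nrm * Real.exp (1 / 2 * lp)))) :=
    mul_le_mul_of_nonneg_left (mul_le_mul_of_nonneg_left hX (Real.exp_pos _).le) (Real.exp_pos _).le
  refine h1.trans ?_
  rw [← hEA, ← hEQ, Real.exp_sub, Real.exp_sub, Real.exp_add, Real.exp_add,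
    Real.exp_log hva, Real.exp_log hwa, div_mul_div_comm, mul_div_assoc']
  rw [le_div_iff₀ (mul_pos hva hwa)]
  have key : (va * wa * nrm) * (Real.exp e1 * Real.exp e2 * Real.exp (1 / 2 * lq) * Real.exp (1 / 2 * lp))
      ≤ c * (Real.exp e1 * Real.exp e2 * Real.exp (1 / 2 * lq) * Real.exp (1 / 2 * lp)) :=
    mul_le_mul_of_nonneg_right hc (by positivity)
  nlinarith [key]

section Key

variable {H : Type*} [NormedAddCommGroup H] [InnerProductSpace ℂ H] [CompleteSpace H]
    {I J : Type*} [Fintype I] [Fintype J] [Nonempty I] [Nonempty J]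
    (ρ : I → H →L[ℂ] H) (τ : J → H →L[ℂ] H)

lemma sum_norm_sq_apply
    (hρ : ∑ i, (ContinuousLinearMap.adjoint (ρ i)).comp (ρ i) = 1) (x : H) :
    ∑ i, ‖ρ i x‖ ^ 2 = ‖x‖ ^ 2 := by
  have h1 : ∀ i, (‖ρ i x‖ ^ 2 : ℝ) = RCLike.re (⟪x, (ContinuousLinearMap.adjoint (ρ i)).comp (ρ i) x⟫_ℂ) := by
    intro i
    rw [ContinuousLinearMap.comp_apply, ContinuousLinearMap.adjoint_inner_right]
    rw [← inner_self_eq_norm_sq (𝕜 := ℂ)]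
  calc ∑ i, ‖ρ i x‖ ^ 2 = RCLike.re (⟪x, (∑ i, (ContinuousLinearMap.adjoint (ρ i)).comp (ρ i)) x⟫_ℂ) := by
        simp_rw [h1, ContinuousLinearMap.sum_apply, inner_sum, map_sum]
    _ = ‖x‖ ^ 2 := by rw [hρ]; exact inner_self_eq_norm_sq (𝕜 := ℂ) x


lemma norm_sum_adjoint_sq_le
    (hρ : ∑ i, (ContinuousLinearMap.adjoint (ρ i)).comp (ρ i) = 1) (Φ : I → H) :
    ‖∑ i, ContinuousLinearMap.adjoint (ρ i) (Φ i)‖ ^ 2 ≤ ∑ i, ‖Φ i‖ ^ 2 := by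
  set u := ∑ i, ContinuousLinearMap.adjoint (ρ i) (Φ i) with hu
  have key : ‖u‖ ^ 2 ≤ ‖u‖ * Real.sqrt (∑ i, ‖Φ i‖ ^ 2) := by
    have h0 : (‖u‖ ^ 2 : ℝ) = RCLike.re (⟪u, u⟫_ℂ) := (inner_self_eq_norm_sq (𝕜 := ℂ) u).symm
    rw [h0, hu]
    calc RCLike.re (⟪u, ∑ i, ContinuousLinearMap.adjoint (ρ i) (Φ i)⟫_ℂ)
        = ∑ i, RCLike.re (⟪ρ i u, Φ i⟫_ℂ) := by
          rw [inner_sum, map_sum]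
          exact Finset.sum_congr rfl fun i _ => by rw [ContinuousLinearMap.adjoint_inner_right]
      _ ≤ ∑ i, ‖ρ i u‖ * ‖Φ i‖ := by
          refine Finset.sum_le_sum fun i _ => ?_
          calc RCLike.re (⟪ρ i u, Φ i⟫_ℂ) ≤ ‖⟪ρ i u, Φ i⟫_ℂ‖ := RCLike.re_le_norm _
            _ ≤ ‖ρ i u‖ * ‖Φ i‖ := norm_inner_le_norm _ _
      _ ≤ Real.sqrt (∑ i, ‖ρ i u‖ ^ 2) * Real.sqrt (∑ i, ‖Φ i‖ ^ 2) :=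
          Real.sum_mul_le_sqrt_mul_sqrt _ _ _
      _ = ‖u‖ * Real.sqrt (∑ i, ‖Φ i‖ ^ 2) := by
          rw [sum_norm_sq_apply ρ hρ u, Real.sqrt_sq (norm_nonneg u)]
  rcases eq_or_lt_of_le (norm_nonneg u) with h | h
  · simp only [← h]; simpa using Finset.sum_nonneg fun i _ => sq_nonneg ‖Φ i‖
  · have h2 : ‖u‖ ≤ Real.sqrt (∑ i, ‖Φ i‖ ^ 2) := by
      nlinarith [key]
    calc ‖u‖ ^ 2 ≤ Real.sqrt (∑ i, ‖Φ i‖ ^ 2) ^ 2 := by nlinarith [h2, norm_nonneg u]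
      _ = ∑ i, ‖Φ i‖ ^ 2 := Real.sq_sqrt (by positivity)


set_option maxHeartbeats 2000000 in
lemma key_ineq
    (hρ : ∑ i, (ContinuousLinearMap.adjoint (ρ i)).comp (ρ i) = 1)
    (hτ : ∑ j, (ContinuousLinearMap.adjoint (τ j)).comp (τ j) = 1)
    (v : I → ℝ) (w : J → ℝ) (hv : ∀ i, 0 < v i) (hw : ∀ j, 0 < w j)
    (ψ : H) (hψ : ‖ψ‖ = 1) (θ : ℝ) (hθ0 : 0 < θ) (hθ1 : θ < 1) :
    (1 - θ) / 2 * Real.log (Gf (fun j => ‖τ j ψ‖ ^ 2) w θ)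
      - (1 + θ) / 2 * Real.log (Gf (fun i => ‖ρ i ψ‖ ^ 2) v (-θ)) ≤
    θ * Real.log (⨆ p : I × J,
        v p.1 * w p.2 * ‖(τ p.2).comp (ContinuousLinearMap.adjoint (ρ p.1))‖) := by
  classical
  set p : I → ℝ := fun i => ‖ρ i ψ‖ ^ 2 with hp
  set q : J → ℝ := fun j => ‖τ j ψ‖ ^ 2 with hq
  set c : ℝ := ⨆ pr : I × J,
      v pr.1 * w pr.2 * ‖(τ pr.2).comp (ContinuousLinearMap.adjoint (ρ pr.1))‖ with hc
  have hsump : ∑ i, p i = 1 := by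
    rw [hp]; simp only []; rw [sum_norm_sq_apply ρ hρ ψ, hψ]; norm_num
  have hsumq : ∑ j, q j = 1 := by
    rw [hq]; simp only []; rw [sum_norm_sq_apply τ hτ ψ, hψ]; norm_num
  have hpnn : ∀ i, 0 ≤ p i := fun i => sq_nonneg _
  have hqnn : ∀ j, 0 ≤ q j := fun j => sq_nonneg _
  have hpex : ∃ i, p i ≠ 0 := by
    by_contra h; push_neg at h
    rw [Finset.sum_congr rfl (fun i _ => h i)] at hsump; simp at hsump
  have hqex : ∃ j, q j ≠ 0 := by
    by_contra h; push_neg at h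
    rw [Finset.sum_congr rfl (fun j _ => h j)] at hsumq; simp at hsumq
  have hbdd : BddAbove (Set.range fun pr : I × J =>
      v pr.1 * w pr.2 * ‖(τ pr.2).comp (ContinuousLinearMap.adjoint (ρ pr.1))‖) :=
    (Set.finite_range _).bddAbove
  have hcle : ∀ i j, v i * w j * ‖(τ j).comp (ContinuousLinearMap.adjoint (ρ i))‖ ≤ c :=
    fun i j => le_ciSup hbdd (i, j)
  -- decomposition of τ j ψ
  have hdecomp : ∀ x : H, (∑ i, ContinuousLinearMap.adjoint (ρ i) (ρ i x)) = x := by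
    intro x
    have := congrArg (fun T : H →L[ℂ] H => T x) hρ
    simpa [ContinuousLinearMap.sum_apply] using this
  have hcpos : 0 < c := by
    by_contra h
    push_neg at h
    have hzero : ∀ i j, (τ j).comp (ContinuousLinearMap.adjoint (ρ i)) = 0 := by
      intro i j
      have h1 := hcle i j
      have h2 : 0 < v i * w j := mul_pos (hv i) (hw j)
      have : ‖(τ j).comp (ContinuousLinearMap.adjoint (ρ i))‖ ≤ 0 := by
        nlinarith [norm_nonneg ((τ j).comp (ContinuousLinearMap.adjoint (ρ i)))]
      exact norm_le_zero_iff.mp this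
    obtain ⟨j, hj⟩ := hqex
    apply hj
    have : τ j ψ = 0 := by
      have : τ j ψ = τ j (∑ i, ContinuousLinearMap.adjoint (ρ i) (ρ i ψ)) := by
        rw [hdecomp]
      rw [this, map_sum]
      refine Finset.sum_eq_zero fun i _ => ?_
      have := hzero i j
      calc τ j (ContinuousLinearMap.adjoint (ρ i) (ρ i ψ))
          = ((τ j).comp (ContinuousLinearMap.adjoint (ρ i))) (ρ i ψ) := rfl
        _ = 0 := by rw [this]; rfl
    simp [hq, this]
  -- the analytic family
  set A1 : I → ℝ := fun i => 1 / (2 * (1 + θ)) * Real.log (p i) + 1 / (1 + θ) * Real.log (v i) with hA1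
  set A0 : I → ℝ := fun i => (1 / (2 * (1 + θ)) - 1 / 2) * Real.log (p i) - θ / (1 + θ) * Real.log (v i) with hA0
  set B1 : J → ℝ := fun j => 1 / (2 * (1 - θ)) * Real.log (q j) + (θ / (1 - θ) + 1) * Real.log (w j) with hB1
  set B0 : J → ℝ := fun j => (1 / (2 * (1 - θ)) - 1 / 2) * Real.log (q j) + θ / (1 - θ) * Real.log (w j) with hB0
  have h1θ : (1 : ℝ) + θ ≠ 0 := by linarith
  have h1θ' : (1 : ℝ) - θ ≠ 0 := by linarith
  set F : ℂ → ℂ := fun z => ∑ i, ∑ j,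
      (if p i = 0 then 0 else Complex.exp ((A1 i : ℂ) * z + (A0 i : ℂ))) *
      ((if q j = 0 then 0 else Complex.exp ((B1 j : ℂ) * z + (B0 j : ℂ))) *
      ⟪τ j ψ, τ j (ContinuousLinearMap.adjoint (ρ i) (ρ i ψ))⟫_ℂ) with hF
  set Q : ℝ := Gf q w θ with hQ
  set A : ℝ := Gf p v (-θ) with hA
  have hQpos : 0 < Q := Gf_pos q w θ hqex
  have hApos : 0 < A := Gf_pos p v (-θ) hpex
  -- norms of the coefficients
  have hnorma : ∀ (i : I) (z : ℂ), ‖(if p i = 0 then 0 else Complex.exp ((A1 i : ℂ) * z + (A0 i : ℂ)))‖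
      = if p i = 0 then 0 else Real.exp (A1 i * z.re + A0 i) := by
    intro i z
    by_cases h : p i = 0
    · simp [h]
    · simp only [h, if_false, Complex.norm_exp]
      congr 1
      simp
  have hnormb : ∀ (j : J) (z : ℂ), ‖(if q j = 0 then 0 else Complex.exp ((B1 j : ℂ) * z + (B0 j : ℂ)))‖
      = if q j = 0 then 0 else Real.exp (B1 j * z.re + B0 j) := by
    intro j z
    by_cases h : q j = 0
    · simp [h]
    · simp only [h, if_false, Complex.norm_exp]
      congr 1
      simp
  -- differentiability
  have hdiff : Differentiable ℂ F := by
    refine Differentiable.fun_sum fun i _ => Differentiable.fun_sum fun j _ => ?_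
    by_cases h : p i = 0
    · simp [h]
    · by_cases h' : q j = 0
      · simp [h, h']
      · simp only [h, h', if_false]
        apply Differentiable.mul
        · exact Complex.differentiable_exp.comp (by fun_prop)
        · exact Differentiable.mul (Complex.differentiable_exp.comp (by fun_prop)) (by fun_prop)
  -- boundedness on the strip
  have hbddF : BddAbove ((norm ∘ F) '' (Complex.HadamardThreeLines.verticalClosedStrip 0 1)) := by
    refine ⟨∑ i, ∑ j, Real.exp (|A1 i| + |A0 i|) * (Real.exp (|B1 j| + |B0 j|) *
      ‖⟪τ j ψ, τ j (ContinuousLinearMap.adjoint (ρ i) (ρ i ψ))⟫_ℂ‖), ?_⟩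
    rintro y ⟨z, hz, rfl⟩
    simp only [Function.comp_apply]
    refine (norm_sum_le _ _).trans (Finset.sum_le_sum fun i _ => (norm_sum_le _ _).trans
      (Finset.sum_le_sum fun j _ => ?_))
    simp only [norm_mul, hnorma, hnormb]
    have hz0 : 0 ≤ z.re := hz.1
    have hz1 : z.re ≤ 1 := hz.2
    have haux : ∀ (a b : ℝ), a * z.re + b ≤ |a| + |b| := by
      intro a b
      have h1 : a * z.re ≤ |a| := by nlinarith [le_abs_self a, neg_abs_le a, abs_nonneg a]
      have := le_abs_self b
      linarith
    have ha' : (if p i = 0 then 0 else Real.exp (A1 i * z.re + A0 i)) ≤ Real.exp (|A1 i| + |A0 i|) := by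
      refine le_trans ?_ (Real.exp_le_exp.mpr (haux (A1 i) (A0 i)))
      by_cases h : p i = 0 <;> simp [h, (Real.exp_pos _).le]
    have hb' : (if q j = 0 then 0 else Real.exp (B1 j * z.re + B0 j)) ≤ Real.exp (|B1 j| + |B0 j|) := by
      refine le_trans ?_ (Real.exp_le_exp.mpr (haux (B1 j) (B0 j)))
      by_cases h : q j = 0 <;> simp [h, (Real.exp_pos _).le]
    refine mul_le_mul ha' (mul_le_mul hb' le_rfl (norm_nonneg _) (Real.exp_pos _).le) ?_ (Real.exp_pos _).le
    have : (0:ℝ) ≤ if q j = 0 then 0 else Real.exp (B1 j * z.re + B0 j) := by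
      by_cases h : q j = 0 <;> simp [h, (Real.exp_pos _).le]
    positivity

  -- exponent identities
  have hea : ∀ i : I, 2 * A0 i + Real.log (p i)
      = (Real.log (p i) + 2 * (-θ) * Real.log (v i)) / (1 - -θ) := by
    intro i; simp only [hA0]; exact expid1 h1θ _ _
  have heb : ∀ i : I, A1 i + A0 i + 1 / 2 * Real.log (p i) - Real.log (v i)
      = (Real.log (p i) + 2 * (-θ) * Real.log (v i)) / (1 - -θ) := by
    intro i; simp only [hA1, hA0]; exact expid2 h1θ _ _
  have hec : ∀ i : I, A1 i * θ + A0 i = 0 := by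
    intro i; simp only [hA1, hA0]; exact expid3 h1θ _ _
  have hed : ∀ j : J, 2 * B0 j + Real.log (q j)
      = (Real.log (q j) + 2 * θ * Real.log (w j)) / (1 - θ) := by
    intro j; simp only [hB0]; exact expid4 h1θ' _ _
  have hee : ∀ j : J, B1 j + B0 j + 1 / 2 * Real.log (q j) - Real.log (w j)
      = (Real.log (q j) + 2 * θ * Real.log (w j)) / (1 - θ) := by
    intro j; simp only [hB1, hB0]; exact expid5 h1θ' _ _
  have hef : ∀ j : J, B1 j * θ + B0 j + Real.log (q j)
      = (Real.log (q j) + 2 * θ * Real.log (w j)) / (1 - θ) := by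
    intro j; simp only [hB1, hB0]; exact expid6 h1θ' _ _
  -- the bound on the line re = 0
  have hM0 : ∀ z : ℂ, z.re = 0 → ‖F z‖ ≤ Real.sqrt Q * Real.sqrt A := by
    intro z hzre
    set a : I → ℂ := fun i => if p i = 0 then 0 else Complex.exp ((A1 i : ℂ) * z + (A0 i : ℂ)) with ha
    set b : J → ℂ := fun j => if q j = 0 then 0 else Complex.exp ((B1 j : ℂ) * z + (B0 j : ℂ)) with hb
    set u : H := ∑ i, a i • (ContinuousLinearMap.adjoint (ρ i) (ρ i ψ)) with hu
    have hFz : F z = ∑ j, b j * ⟪τ j ψ, τ j u⟫_ℂ := by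
      simp only [hF]
      rw [Finset.sum_comm]
      refine Finset.sum_congr rfl fun j _ => ?_
      rw [hu, map_sum, inner_sum, Finset.mul_sum]
      refine Finset.sum_congr rfl fun i _ => ?_
      rw [map_smul, inner_smul_right]
      ring
    have hQsum : ∑ j, (‖b j‖ * ‖τ j ψ‖) ^ 2 = Q := by
      rw [hQ, Gf]
      refine Finset.sum_congr rfl fun j _ => ?_
      by_cases h : q j = 0
      · simp [hb, h]
      · have hqpos : 0 < q j := lt_of_le_of_ne (hqnn j) (Ne.symm h)
        simp only [hb]; rw [hnormb j z]; simp only [h, if_false, hzre, mul_zero, zero_add]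
        rw [mul_pow, ← Real.exp_nat_mul]
        have : ‖τ j ψ‖ ^ 2 = Real.exp (Real.log (q j)) := by
          rw [Real.exp_log hqpos]
        rw [this, ← Real.exp_add]
        congr 1
        have := hed j
        push_cast
        linarith
    have huA : ‖u‖ ^ 2 ≤ A := by
      have hrw : u = ∑ i, ContinuousLinearMap.adjoint (ρ i) (a i • ρ i ψ) := by
        rw [hu]
        exact Finset.sum_congr rfl fun i _ => by rw [map_smul]
      rw [hrw]
      refine (norm_sum_adjoint_sq_le ρ hρ _).trans ?_
      rw [hA, Gf]
      refine le_of_eq (Finset.sum_congr rfl fun i _ => ?_)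
      by_cases h : p i = 0
      · simp [ha, h]
      · have hppos : 0 < p i := lt_of_le_of_ne (hpnn i) (Ne.symm h)
        rw [norm_smul, mul_pow, hnorma i z]
        simp only [h, if_false, hzre, mul_zero, zero_add]
        rw [← Real.exp_nat_mul]
        have : ‖ρ i ψ‖ ^ 2 = Real.exp (Real.log (p i)) := by
          rw [Real.exp_log hppos]
        rw [this, ← Real.exp_add]
        congr 1
        have := hea i
        push_cast
        linarith
    calc ‖F z‖ = ‖∑ j, b j * ⟪τ j ψ, τ j u⟫_ℂ‖ := by rw [hFz]
      _ ≤ ∑ j, ‖b j * ⟪τ j ψ, τ j u⟫_ℂ‖ := norm_sum_le _ _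
      _ ≤ ∑ j, (‖b j‖ * ‖τ j ψ‖) * ‖τ j u‖ := by
          refine Finset.sum_le_sum fun j _ => ?_
          rw [norm_mul, mul_assoc]
          exact mul_le_mul_of_nonneg_left (norm_inner_le_norm _ _) (norm_nonneg _)
      _ ≤ Real.sqrt (∑ j, (‖b j‖ * ‖τ j ψ‖) ^ 2) * Real.sqrt (∑ j, ‖τ j u‖ ^ 2) :=
          Real.sum_mul_le_sqrt_mul_sqrt _ _ _
      _ = Real.sqrt Q * Real.sqrt (‖u‖ ^ 2) := by rw [hQsum, sum_norm_sq_apply τ hτ u]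
      _ ≤ Real.sqrt Q * Real.sqrt A := by
          exact mul_le_mul_of_nonneg_left (Real.sqrt_le_sqrt huA) (Real.sqrt_nonneg _)

  -- the bound on the line re = 1
  have hM1 : ∀ z : ℂ, z.re = 1 → ‖F z‖ ≤ c * A * Q := by
    intro z hzre
    have hterm : ∀ (i : I) (j : J),
        ‖(if p i = 0 then 0 else Complex.exp ((A1 i : ℂ) * z + (A0 i : ℂ))) *
          ((if q j = 0 then 0 else Complex.exp ((B1 j : ℂ) * z + (B0 j : ℂ))) *
          ⟪τ j ψ, τ j (ContinuousLinearMap.adjoint (ρ i) (ρ i ψ))⟫_ℂ)‖ ≤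
        c * ((if p i = 0 then 0 else Real.exp ((Real.log (p i) + 2 * (-θ) * Real.log (v i)) / (1 - -θ))) *
          (if q j = 0 then 0 else Real.exp ((Real.log (q j) + 2 * θ * Real.log (w j)) / (1 - θ)))) := by
      intro i j
      by_cases hip : p i = 0
      · simp [hip, hcpos.le]
      · by_cases hjq : q j = 0
        · simp [hjq, hip, hcpos.le]
        · have hppos : 0 < p i := lt_of_le_of_ne (hpnn i) (Ne.symm hip)
          have hqpos : 0 < q j := lt_of_le_of_ne (hqnn j) (Ne.symm hjq)
          have hnτ : 0 < ‖τ j ψ‖ := by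
            have h2 : (0:ℝ) < ‖τ j ψ‖ ^ 2 := hqpos
            nlinarith [norm_nonneg (τ j ψ)]
          have hnρ : 0 < ‖ρ i ψ‖ := by
            have h2 : (0:ℝ) < ‖ρ i ψ‖ ^ 2 := hppos
            nlinarith [norm_nonneg (ρ i ψ)]
          rw [norm_mul, norm_mul, hnorma i z, hnormb j z]
          simp only [hip, hjq, if_false, hzre, mul_one]
          have hinner : ‖⟪τ j ψ, τ j (ContinuousLinearMap.adjoint (ρ i) (ρ i ψ))⟫_ℂ‖ ≤
              Real.exp (1 / 2 * Real.log (q j)) *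
                (‖(τ j).comp (ContinuousLinearMap.adjoint (ρ i))‖ * Real.exp (1 / 2 * Real.log (p i))) := by
            have hnec : ‖τ j ψ‖ = Real.exp (1 / 2 * Real.log (q j)) := by
              rw [← Real.exp_log hnτ]
              congr 1
              have hl : Real.log (q j) = 2 * Real.log ‖τ j ψ‖ := by
                have : q j = ‖τ j ψ‖ ^ 2 := rfl
                rw [this, Real.log_pow]; push_cast; ring
              rw [hl]; ring
            have hnec' : ‖ρ i ψ‖ = Real.exp (1 / 2 * Real.log (p i)) := by
              rw [← Real.exp_log hnρ]
              congr 1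
              have hl : Real.log (p i) = 2 * Real.log ‖ρ i ψ‖ := by
                have : p i = ‖ρ i ψ‖ ^ 2 := rfl
                rw [this, Real.log_pow]; push_cast; ring
              rw [hl]; ring
            rw [← hnec, ← hnec']
            refine (norm_inner_le_norm _ _).trans ?_
            refine mul_le_mul_of_nonneg_left ?_ (norm_nonneg _)
            exact ((τ j).comp (ContinuousLinearMap.adjoint (ρ i))).le_opNorm (ρ i ψ)
          exact boundary_one_calc (hv i) (hw j) hinner (hcle i j) (heb i) (hee j)
    calc ‖F z‖ ≤ ∑ i, ∑ j, ‖(if p i = 0 then 0 else Complex.exp ((A1 i : ℂ) * z + (A0 i : ℂ))) *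
          ((if q j = 0 then 0 else Complex.exp ((B1 j : ℂ) * z + (B0 j : ℂ))) *
          ⟪τ j ψ, τ j (ContinuousLinearMap.adjoint (ρ i) (ρ i ψ))⟫_ℂ)‖ := by
          simp only [hF]
          exact (norm_sum_le _ _).trans (Finset.sum_le_sum fun i _ => norm_sum_le _ _)
      _ ≤ ∑ i, ∑ j, c * ((if p i = 0 then 0 else Real.exp ((Real.log (p i) + 2 * (-θ) * Real.log (v i)) / (1 - -θ))) *
          (if q j = 0 then 0 else Real.exp ((Real.log (q j) + 2 * θ * Real.log (w j)) / (1 - θ)))) :=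
          Finset.sum_le_sum fun i _ => Finset.sum_le_sum fun j _ => hterm i j
      _ = c * A * Q := by
          simp_rw [← Finset.mul_sum]
          rw [← Finset.sum_mul]
          rw [hA, hQ, Gf, Gf]
          ring
  -- value of F at θ
  have hFθ : F (θ : ℂ) = (Q : ℂ) := by
    simp only [hF]
    rw [Finset.sum_comm]
    have hcol : ∀ j : J, (∑ i, (if p i = 0 then 0 else Complex.exp ((A1 i : ℂ) * (θ:ℂ) + (A0 i : ℂ))) *
        ((if q j = 0 then 0 else Complex.exp ((B1 j : ℂ) * (θ:ℂ) + (B0 j : ℂ))) *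
        ⟪τ j ψ, τ j (ContinuousLinearMap.adjoint (ρ i) (ρ i ψ))⟫_ℂ))
        = (if q j = 0 then 0 else Complex.exp ((B1 j : ℂ) * (θ:ℂ) + (B0 j : ℂ))) * (q j : ℂ) := by
      intro j
      have hstep : ∀ i : I, (if p i = 0 then 0 else Complex.exp ((A1 i : ℂ) * (θ:ℂ) + (A0 i : ℂ))) *
          ((if q j = 0 then 0 else Complex.exp ((B1 j : ℂ) * (θ:ℂ) + (B0 j : ℂ))) *
          ⟪τ j ψ, τ j (ContinuousLinearMap.adjoint (ρ i) (ρ i ψ))⟫_ℂ)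
          = (if q j = 0 then 0 else Complex.exp ((B1 j : ℂ) * (θ:ℂ) + (B0 j : ℂ))) *
          ⟪τ j ψ, τ j (ContinuousLinearMap.adjoint (ρ i) (ρ i ψ))⟫_ℂ := by
        intro i
        by_cases h : p i = 0
        · have hρ0 : ρ i ψ = 0 := by
            have : ‖ρ i ψ‖ ^ 2 = 0 := h
            simpa [pow_eq_zero_iff] using this
          simp [h, hρ0]
        · have : (A1 i : ℂ) * (θ:ℂ) + (A0 i : ℂ) = ((A1 i * θ + A0 i : ℝ) : ℂ) := by push_cast; ring
          rw [this, hec i]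
          simp [h]
      rw [Finset.sum_congr rfl fun i _ => hstep i, ← Finset.mul_sum]
      congr 1
      have : (∑ i, ⟪τ j ψ, τ j (ContinuousLinearMap.adjoint (ρ i) (ρ i ψ))⟫_ℂ)
          = ⟪τ j ψ, τ j (∑ i, ContinuousLinearMap.adjoint (ρ i) (ρ i ψ))⟫_ℂ := by
        rw [map_sum, inner_sum]
      rw [this, hdecomp ψ, inner_self_eq_norm_sq_to_K]
      norm_cast
    rw [Finset.sum_congr rfl fun j _ => hcol j]
    rw [hQ, Gf]
    push_cast
    refine Finset.sum_congr rfl fun j _ => ?_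
    by_cases h : q j = 0
    · simp [h]
    · have hqpos : 0 < q j := lt_of_le_of_ne (hqnn j) (Ne.symm h)
      simp only [h, if_false]
      have h1 : (B1 j : ℂ) * (θ:ℂ) + (B0 j : ℂ) = ((B1 j * θ + B0 j : ℝ) : ℂ) := by push_cast; ring
      rw [h1, ← Complex.ofReal_exp]
      rw [show ((q j : ℝ) : ℂ) = ((Real.exp (Real.log (q j)) : ℝ) : ℂ) by rw [Real.exp_log hqpos]]
      rw [← Complex.ofReal_mul, ← Real.exp_add]
      congr 2
      have := hef j
      linarith
  -- Hadamard three lines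
  have hmem : (θ : ℂ) ∈ Complex.HadamardThreeLines.verticalClosedStrip 0 1 := by
    simp only [Complex.HadamardThreeLines.verticalClosedStrip, Set.mem_preimage,
      Complex.ofReal_re, Set.mem_Icc]
    exact ⟨hθ0.le, hθ1.le⟩
  have h3 := Complex.HadamardThreeLines.norm_le_interp_of_mem_verticalClosedStrip₀₁' F hmem
    (hdiff.diffContOnCl) hbddF
    (fun z hz => hM0 z (by simpa using hz)) (fun z hz => hM1 z (by simpa using hz))
  rw [hFθ] at h3
  simp only [Complex.ofReal_re] at h3
  have hnormQ : ‖(Q : ℂ)‖ = Q := by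
    rw [Complex.norm_real, Real.norm_eq_abs, abs_of_pos hQpos]
  rw [hnormQ] at h3
  -- final log algebra
  have hsqQA : (0:ℝ) < Real.sqrt Q * Real.sqrt A := by positivity
  have hcAQ : (0:ℝ) < c * A * Q := by positivity
  have hlog : Real.log Q ≤ (1 - θ) * Real.log (Real.sqrt Q * Real.sqrt A) + θ * Real.log (c * A * Q) := by
    calc Real.log Q ≤ Real.log ((Real.sqrt Q * Real.sqrt A) ^ (1 - θ) * (c * A * Q) ^ θ) :=
          Real.log_le_log hQpos h3
      _ = (1 - θ) * Real.log (Real.sqrt Q * Real.sqrt A) + θ * Real.log (c * A * Q) := by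
          rw [Real.log_mul (by positivity) (by positivity), Real.log_rpow hsqQA, Real.log_rpow hcAQ]
  have hlog1 : Real.log (Real.sqrt Q * Real.sqrt A) = Real.log Q / 2 + Real.log A / 2 := by
    rw [Real.log_mul (by positivity) (by positivity), Real.log_sqrt hQpos.le, Real.log_sqrt hApos.le]
  have hlog2 : Real.log (c * A * Q) = Real.log c + Real.log A + Real.log Q := by
    rw [Real.log_mul (by positivity) (by positivity), Real.log_mul (by positivity) (by positivity)]
  rw [hlog1, hlog2] at hlog
  linarith





end Key

set_option maxHeartbeats 1000000 in
/-- **Entropic uncertainty principle for weighted quantum partitions.**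
If `{ρ_i}` and `{τ_j}` are quantum partitions of unity on a complex Hilbert
space and `{v_i}`, `{w_j}` are positive weights, then for every unit vector
`ψ`, the pressures satisfy
`p(ψ,ρ,v) + p(ψ,τ,w) ≥ -2 log (max_{i,j} v_i w_j ‖τ_j ρ_i*‖)`. -/
theorem entropic_uncertainty_weighted_partition
    {H : Type*} [NormedAddCommGroup H] [InnerProductSpace ℂ H] [CompleteSpace H]
    {I J : Type*} [Fintype I] [Fintype J] [Nonempty I] [Nonempty J]
    (ρ : I → H →L[ℂ] H) (τ : J → H →L[ℂ] H)
    (hρ : ∑ i, (ContinuousLinearMap.adjoint (ρ i)).comp (ρ i) = 1)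
    (hτ : ∑ j, (ContinuousLinearMap.adjoint (τ j)).comp (τ j) = 1)
    (v : I → ℝ) (w : J → ℝ) (hv : ∀ i, 0 < v i) (hw : ∀ j, 0 < w j)
    (ψ : H) (hψ : ‖ψ‖ = 1) :
    ((∑ i, eta (‖ρ i ψ‖ ^ 2)) - 2 * ∑ i, ‖ρ i ψ‖ ^ 2 * Real.log (v i)) +
      ((∑ j, eta (‖τ j ψ‖ ^ 2)) - 2 * ∑ j, ‖τ j ψ‖ ^ 2 * Real.log (w j)) ≥
      -2 * Real.log (⨆ p : I × J,
        v p.1 * w p.2 * ‖(τ p.2).comp (ContinuousLinearMap.adjoint (ρ p.1))‖) := by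
  classical
  set p : I → ℝ := fun i => ‖ρ i ψ‖ ^ 2 with hp
  set q : J → ℝ := fun j => ‖τ j ψ‖ ^ 2 with hq
  set c : ℝ := ⨆ pr : I × J,
      v pr.1 * w pr.2 * ‖(τ pr.2).comp (ContinuousLinearMap.adjoint (ρ pr.1))‖ with hc
  have hpnn : ∀ i, 0 ≤ p i := fun i => sq_nonneg _
  have hqnn : ∀ j, 0 ≤ q j := fun j => sq_nonneg _
  have hsump : ∑ i, p i = 1 := by
    rw [hp]; simp only []; rw [sum_norm_sq_apply ρ hρ ψ, hψ]; norm_num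
  have hsumq : ∑ j, q j = 1 := by
    rw [hq]; simp only []; rw [sum_norm_sq_apply τ hτ ψ, hψ]; norm_num
  set L : ℝ → ℝ := fun t => (1 - t) / 2 * Real.log (Gf q w t)
      - (1 + t) / 2 * Real.log (Gf p v (-t)) with hL
  have hkey : ∀ t : ℝ, 0 < t → t < 1 → L t ≤ t * Real.log c :=
    fun t h1 h2 => key_ineq ρ τ hρ hτ v w hv hw ψ hψ t h1 h2
  have hGq0 : Gf q w 0 = 1 := by rw [Gf_zero q w hqnn, hsumq]
  have hGp0 : Gf p v 0 = 1 := by rw [Gf_zero p v hpnn, hsump]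
  have hL0 : L 0 = 0 := by
    rw [hL]; simp only [neg_zero, hGq0, hGp0, Real.log_one]; ring
  -- derivative of L at 0
  set DQ : ℝ := ∑ j, (q j * Real.log (q j) + 2 * q j * Real.log (w j)) with hDQ
  set DP : ℝ := ∑ i, (p i * Real.log (p i) + 2 * p i * Real.log (v i)) with hDP
  have hderivL : HasDerivAt L (DQ / 2 + DP / 2) 0 := by
    have hGq : HasDerivAt (fun t => Gf q w t) DQ 0 := Gf_hasDerivAt q w hqnn
    have hGp : HasDerivAt (fun t => Gf p v (-t)) (-DP) 0 := by
      have h1 : HasDerivAt (fun t : ℝ => -t) (-1) 0 := by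
        exact (hasDerivAt_id (0:ℝ)).neg
      have h2 : HasDerivAt (Gf p v) DP (-0) := by
        rw [neg_zero]; exact Gf_hasDerivAt p v hpnn
      exact (HasDerivAt.comp 0 h2 h1).congr_deriv (by ring)
    have hlogq : HasDerivAt (fun t => Real.log (Gf q w t)) DQ 0 := by
      have := hGq.log (by rw [hGq0]; norm_num)
      simpa [hGq0] using this
    have hlogp : HasDerivAt (fun t => Real.log (Gf p v (-t))) (-DP) 0 := by
      have := hGp.log (by simp only [neg_zero, hGp0]; norm_num)
      simpa [hGp0] using this
    have hu1 : HasDerivAt (fun t : ℝ => (1 - t) / 2) (-(1/2) : ℝ) 0 := by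
      have := ((hasDerivAt_id (0:ℝ)).const_sub 1).div_const 2
      exact this.congr_deriv (by norm_num)
    have hu2 : HasDerivAt (fun t : ℝ => (1 + t) / 2) ((1/2) : ℝ) 0 := by
      have := ((hasDerivAt_id (0:ℝ)).const_add 1).div_const 2
      exact this.congr_deriv (by norm_num)
    have hm1 : HasDerivAt (fun t : ℝ => (1 - t) / 2 * Real.log (Gf q w t))
        (-(1/2) * Real.log (Gf q w 0) + (1 - 0)/2 * DQ) 0 := hu1.mul hlogq
    have hm2 : HasDerivAt (fun t : ℝ => (1 + t) / 2 * Real.log (Gf p v (-t)))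
        ((1/2) * Real.log (Gf p v (-0)) + (1 + 0)/2 * (-DP)) 0 := hu2.mul hlogp
    have := hm1.sub hm2
    rw [hL]
    exact this.congr_deriv (by simp only [neg_zero, hGq0, hGp0, Real.log_one]; ring)
  -- the slope bound
  have hslope : DQ / 2 + DP / 2 ≤ Real.log c := by
    have htend : Filter.Tendsto (fun t => L t / t) (nhdsWithin 0 (Set.Ioi 0))
        (nhds (DQ / 2 + DP / 2)) := by
      have h1 := hasDerivAt_iff_tendsto_slope.mp hderivL
      have h2 : Filter.Tendsto (slope L 0) (nhdsWithin 0 (Set.Ioi 0)) (nhds (DQ / 2 + DP / 2)) :=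
        h1.mono_left (nhdsWithin_mono 0 (fun x hx => ne_of_gt hx))
      refine h2.congr' ?_
      filter_upwards [self_mem_nhdsWithin] with t ht
      rw [slope_def_field, hL0]
      rw [div_eq_div_iff] <;> try ring
      all_goals simp [ne_of_gt (Set.mem_Ioi.mp ht)]
    refine le_of_tendsto htend ?_
    filter_upwards [Ioo_mem_nhdsGT_of_mem (Set.left_mem_Ico.mpr one_pos)] with t ht
    rw [div_le_iff₀ (Set.mem_Ioo.mp ht).1]
    calc L t ≤ t * Real.log c := hkey t ht.1 ht.2
      _ = Real.log c * t := by ring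
  -- conclude
  have e1 : ∑ i, eta (p i) = -∑ i, p i * Real.log (p i) := by
    rw [← Finset.sum_neg_distrib]
    exact Finset.sum_congr rfl fun i _ => by rw [eta]; ring
  have e2 : ∑ j, eta (q j) = -∑ j, q j * Real.log (q j) := by
    rw [← Finset.sum_neg_distrib]
    exact Finset.sum_congr rfl fun j _ => by rw [eta]; ring
  have e3 : DQ = ∑ j, q j * Real.log (q j) + 2 * ∑ j, q j * Real.log (w j) := by
    rw [hDQ, Finset.sum_add_distrib, Finset.mul_sum]
    congr 1
    exact Finset.sum_congr rfl fun j _ => by ring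
  have e4 : DP = ∑ i, p i * Real.log (p i) + 2 * ∑ i, p i * Real.log (v i) := by
    rw [hDP, Finset.sum_add_distrib, Finset.mul_sum]
    congr 1
    exact Finset.sum_congr rfl fun i _ => by ring
  rw [ge_iff_le]
  have := hslope
  rw [e3, e4] at this
  rw [e1, e2]
  linarith
end

section
/- Norm of the cross block operator: Let ℋ be a complex Hilbert space and let {ρ_i}_{i∈I}, {τ_j}_{j∈J} be finite families of bounded operators on ℋ such that S_ρ = ∑_{i∈I} ρ_i* ρ_i and S_τ = ∑_{j∈J} τ_j* τ_j are bounded (automatically positive selfadjoint) operators. Let T : ℋ^{|I|} → ℋ^{|J|} be the block operator with entries T_{ji} = τ_j ρ_i*, i.e. (TΨ)_j = ∑_{i∈I} τ_j ρ_i* Ψ_i. Then the operator norm of T from ℓ²(ℋ^{|I|}) to ℓ²(ℋ^{|J|}) equals ‖√S_ρ · √S_τ‖, where √S denotes the positive square root of a positive selfadjoint bounded operator S and ‖·‖ is the operator norm on ℋ. -/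
lemma norm_adjoint_aux {E F : Type*} [NormedAddCommGroup E] [InnerProductSpace ℂ E]
    [CompleteSpace E] [NormedAddCommGroup F] [InnerProductSpace ℂ F] [CompleteSpace F]
    (A : E →L[ℂ] F) : ‖ContinuousLinearMap.adjoint A‖ = ‖A‖ :=
  LinearIsometryEquiv.norm_map _ A

set_option maxHeartbeats 1000000 in
/-- **Norm of the cross block operator.**
If `S_ρ = ∑ ρ_i* ρ_i` and `S_τ = ∑ τ_j* τ_j`, with positive square roots `R_ρ`, `R_τ`
(i.e. positive selfadjoint operators with `R_ρ² = S_ρ`, `R_τ² = S_τ`), then the block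
operator `T : ℋ^{|I|} → ℋ^{|J|}`, `(TΨ)_j = ∑_i τ_j ρ_i* Ψ_i`, has operator norm
`‖T‖ = ‖√S_ρ · √S_τ‖`. -/
theorem cross_block_operator_norm
    {H : Type*} [NormedAddCommGroup H] [InnerProductSpace ℂ H] [CompleteSpace H]
    {I J : Type*} [Fintype I] [Fintype J]
    (ρ : I → H →L[ℂ] H) (τ : J → H →L[ℂ] H)
    (Rρ Rτ : H →L[ℂ] H)
    (hRρpos : Rρ.IsPositive) (hRτpos : Rτ.IsPositive)
    (hRρ : Rρ.comp Rρ = ∑ i, (ContinuousLinearMap.adjoint (ρ i)).comp (ρ i))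
    (hRτ : Rτ.comp Rτ = ∑ j, (ContinuousLinearMap.adjoint (τ j)).comp (τ j))
    (T : (PiLp 2 fun _ : I => H) →L[ℂ] (PiLp 2 fun _ : J => H))
    (hT : ∀ (Ψ : PiLp 2 fun _ : I => H) (j : J),
      T Ψ j = ∑ i, (τ j) ((ContinuousLinearMap.adjoint (ρ i)) (Ψ i))) :
    ‖T‖ = ‖Rρ.comp Rτ‖ := by
  haveI : CompleteSpace (PiLp 2 fun _ : I => H) := inferInstance
  haveI : CompleteSpace (PiLp 2 fun _ : J => H) := inferInstance
  -- selfadjointness of the square roots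
  have hRρsa : ContinuousLinearMap.adjoint Rρ = Rρ :=
    hRρpos.isSelfAdjoint.adjoint_eq
  have hRτsa : ContinuousLinearMap.adjoint Rτ = Rτ :=
    hRτpos.isSelfAdjoint.adjoint_eq
  -- the column operators V : H → ℋ^I and U : H → ℋ^J
  set V : H →L[ℂ] (PiLp 2 fun _ : I => H) :=
    ((PiLp.continuousLinearEquiv 2 ℂ (fun _ : I => H)).symm :
        ((i : I) → H) →L[ℂ] PiLp 2 fun _ : I => H).comp (ContinuousLinearMap.pi ρ) with hV
  set U : H →L[ℂ] (PiLp 2 fun _ : J => H) :=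
    ((PiLp.continuousLinearEquiv 2 ℂ (fun _ : J => H)).symm :
        ((j : J) → H) →L[ℂ] PiLp 2 fun _ : J => H).comp (ContinuousLinearMap.pi τ) with hU
  have hVapp : ∀ (x : H) (i : I), V x i = ρ i x := fun x i => rfl
  have hUapp : ∀ (x : H) (j : J), U x j = τ j x := fun x j => rfl
  -- adjoint of V applied to Ψ
  have hVadj : ∀ Ψ : PiLp 2 fun _ : I => H,
      ContinuousLinearMap.adjoint V Ψ = ∑ i, ContinuousLinearMap.adjoint (ρ i) (Ψ i) := by
    intro Ψ
    refine ext_inner_left ℂ fun w => ?_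
    rw [ContinuousLinearMap.adjoint_inner_right]
    rw [PiLp.inner_apply, inner_sum]
    refine Finset.sum_congr rfl fun i _ => ?_
    rw [hVapp, ContinuousLinearMap.adjoint_inner_right]
  -- U† U = Rτ²
  have hUU : (ContinuousLinearMap.adjoint U).comp U = Rτ.comp Rτ := by
    rw [hRτ]
    ext x
    refine ext_inner_left ℂ fun w => ?_
    simp only [ContinuousLinearMap.comp_apply, ContinuousLinearMap.adjoint_inner_right,
      ContinuousLinearMap.sum_apply, inner_sum, PiLp.inner_apply]
    exact Finset.sum_congr rfl fun j _ => rfl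
  -- V† V = Rρ²
  have hVV : (ContinuousLinearMap.adjoint V).comp V = Rρ.comp Rρ := by
    rw [hRρ]
    ext x
    refine ext_inner_left ℂ fun w => ?_
    simp only [ContinuousLinearMap.comp_apply, ContinuousLinearMap.adjoint_inner_right,
      ContinuousLinearMap.sum_apply, inner_sum, PiLp.inner_apply]
    exact Finset.sum_congr rfl fun i _ => rfl
  -- T = U ∘ V†
  have hTUV : T = U.comp (ContinuousLinearMap.adjoint V) := by
    ext Ψ : 1
    apply (PiLp.continuousLinearEquiv 2 ℂ (fun _ : J => H)).injective
    funext j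
    show T Ψ j = U (ContinuousLinearMap.adjoint V Ψ) j
    rw [hT, hUapp, hVadj, map_sum]
  set B : (PiLp 2 fun _ : I => H) →L[ℂ] H := Rτ.comp (ContinuousLinearMap.adjoint V) with hB
  -- step 1: ‖T‖ = ‖B‖
  have hTB : ‖T‖ = ‖B‖ := by
    have h1 : (ContinuousLinearMap.adjoint T).comp T
        = (ContinuousLinearMap.adjoint B).comp B := by
      rw [hTUV, hB]
      simp only [ContinuousLinearMap.adjoint_comp, ContinuousLinearMap.adjoint_adjoint, hRτsa]
      refine ContinuousLinearMap.ext fun x => ?_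
      simp only [ContinuousLinearMap.comp_apply]
      congr 1
      exact ContinuousLinearMap.ext_iff.mp hUU _
    have h := ContinuousLinearMap.norm_adjoint_comp_self T
    rw [h1, ContinuousLinearMap.norm_adjoint_comp_self B] at h
    exact (mul_self_inj (norm_nonneg _) (norm_nonneg _)).mp h.symm
  -- step 2: ‖B‖ = ‖Rρ ∘ Rτ‖
  have hBR : ‖B‖ = ‖Rρ.comp Rτ‖ := by
    have h2 : B.comp (ContinuousLinearMap.adjoint B)
        = (ContinuousLinearMap.adjoint (Rρ.comp Rτ)).comp (Rρ.comp Rτ) := by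
      rw [hB]
      simp only [ContinuousLinearMap.adjoint_comp, ContinuousLinearMap.adjoint_adjoint,
        hRρsa, hRτsa]
      ext x
      simp only [ContinuousLinearMap.comp_apply]
      congr 1
      exact ContinuousLinearMap.ext_iff.mp hVV _
    have h := ContinuousLinearMap.norm_adjoint_comp_self (ContinuousLinearMap.adjoint B)
    rw [ContinuousLinearMap.adjoint_adjoint, norm_adjoint_aux, h2,
      ContinuousLinearMap.norm_adjoint_comp_self] at h
    exact ((mul_self_inj (norm_nonneg _) (norm_nonneg _)).mp h).symm
  rw [hTB, hBR]
end
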